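/- arXiv:math/0611060 — 7 statements merged into one kernel-verified Lean document; each statement's English description precedes it below -/
import Mathlib

section
/- Let M be a module over the disk algebra, i.e. a complex vector subspace of the continuous complex-valued functions on the closed unit disk Δ = {z ∈ ℂ : |z| ≤ 1} that contains the constant function 1 and satisfies a·f ∈ M whenever a is in the disk algebra and f ∈ M. Assume the maximum principle holds for M: for every f ∈ M and every z₀ in the open unit disk, |f(z₀)| ≤ sup_{|z|=1} |f(z)|. Then every function in M is holomorphic on the open unit disk {z ∈ ℂ : |z| < 1}. -/
open Polynomial Metric

namespace RudinAux

lemma mul_conj_one {x : ℂ} (hx : x ∈ Metric.sphere (0:ℂ) 1) :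
    x * (starRingEnd ℂ) x = 1 := by
  rw [Complex.mul_conj]
  norm_cast
  rw [Complex.normSq_eq_norm_sq]
  have : ‖x‖ = 1 := mem_sphere_zero_iff_norm.mp hx
  rw [this]; norm_num

lemma exists_reflect (R : Polynomial ℂ) : ∃ R' : Polynomial ℂ, ∀ x : ℂ,
    x * (starRingEnd ℂ) x = 1 →
    (starRingEnd ℂ) (R.eval x) = ((starRingEnd ℂ) x) ^ R.natDegree * R'.eval x := by
  refine ⟨∑ k ∈ Finset.range (R.natDegree + 1),
      C ((starRingEnd ℂ) (R.coeff k)) * X ^ (R.natDegree - k), fun x hx => ?_⟩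
  rw [Polynomial.eval_finset_sum, R.eval_eq_sum_range, map_sum, Finset.mul_sum]
  refine Finset.sum_congr rfl fun k hk => ?_
  rw [Finset.mem_range, Nat.lt_succ_iff] at hk
  obtain ⟨d, hd⟩ : ∃ d, R.natDegree = k + d := ⟨R.natDegree - k, by omega⟩
  rw [hd]
  simp only [map_mul, map_pow, eval_mul, eval_C, eval_pow, eval_X]
  have h2 : x ^ d * ((starRingEnd ℂ) x) ^ d = 1 := by rw [← mul_pow, hx, one_pow]
  have h3 : (k + d) - k = d := by omega
  rw [h3, pow_add]
  linear_combination (-((starRingEnd ℂ) (R.coeff k) * ((starRingEnd ℂ) x) ^ k)) * h2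

lemma exists_split (N : ℕ) (R : Polynomial ℂ) : ∃ P Q : Polynomial ℂ, ∀ x : ℂ,
    x * (starRingEnd ℂ) x = 1 →
    ((starRingEnd ℂ) x) ^ N * R.eval x = P.eval x + (starRingEnd ℂ) (x * Q.eval x) := by
  refine ⟨∑ k ∈ Finset.range (R.natDegree + 1),
      if N ≤ k then C (R.coeff k) * X ^ (k - N) else 0,
    ∑ k ∈ Finset.range (R.natDegree + 1),
      if N ≤ k then 0 else C ((starRingEnd ℂ) (R.coeff k)) * X ^ (N - k - 1), fun x hx => ?_⟩
  rw [Polynomial.eval_finset_sum, Polynomial.eval_finset_sum, R.eval_eq_sum_range,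
    Finset.mul_sum, Finset.mul_sum, map_sum, ← Finset.sum_add_distrib]
  refine Finset.sum_congr rfl fun k _ => ?_
  by_cases hNk : N ≤ k
  · obtain ⟨d, rfl⟩ : ∃ d, k = N + d := ⟨k - N, by omega⟩
    have h3 : N + d - N = d := by omega
    simp only [hNk, if_true, h3, eval_mul, eval_C, eval_pow, eval_X, mul_zero, map_zero, add_zero,
      eval_zero]
    have h2 : x ^ N * ((starRingEnd ℂ) x) ^ N = 1 := by rw [← mul_pow, hx, one_pow]
    rw [pow_add]
    linear_combination (R.coeff (N + d) * x ^ d) * h2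
  · obtain ⟨d, rfl⟩ : ∃ d, N = k + d + 1 := ⟨N - k - 1, by omega⟩
    have h3 : k + d + 1 - k - 1 = d := by omega
    simp only [hNk, if_false, if_true, h3, eval_mul, eval_C, eval_pow, eval_X, eval_zero,
      zero_add, map_mul, map_pow]
    have h2 : x ^ k * ((starRingEnd ℂ) x) ^ k = 1 := by rw [← mul_pow, hx, one_pow]
    rw [Complex.conj_conj]
    rw [pow_add, pow_add]
    linear_combination (R.coeff k * ((starRingEnd ℂ) x) ^ d * (starRingEnd ℂ) x) * h2

lemma normal_form (g : C(↥(Metric.sphere (0:ℂ) 1), ℂ))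
    (hg : g ∈ (polynomialFunctions (Metric.sphere (0:ℂ) 1)).starClosure) :
    ∃ (N : ℕ) (R : Polynomial ℂ), ∀ x : ↥(Metric.sphere (0:ℂ) 1),
      g x = ((starRingEnd ℂ) (x : ℂ)) ^ N * R.eval (x : ℂ) := by
  rw [polynomialFunctions.starClosure_eq_adjoin_X] at hg
  induction hg using StarAlgebra.adjoin_induction with
  | mem p hp =>
    rw [Set.mem_singleton_iff] at hp
    subst hp
    exact ⟨0, X, fun x => by simp⟩
  | algebraMap r =>
    exact ⟨0, C r, fun x => by simp⟩
  | add p q hp hq ihp ihq =>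
    obtain ⟨N₁, R₁, h₁⟩ := ihp
    obtain ⟨N₂, R₂, h₂⟩ := ihq
    refine ⟨N₁ + N₂, X ^ N₂ * R₁ + X ^ N₁ * R₂, fun x => ?_⟩
    have hx := mul_conj_one x.2
    have e1 : (x : ℂ) ^ N₁ * ((starRingEnd ℂ) (x : ℂ)) ^ N₁ = 1 := by
      rw [← mul_pow, hx, one_pow]
    have e2 : (x : ℂ) ^ N₂ * ((starRingEnd ℂ) (x : ℂ)) ^ N₂ = 1 := by
      rw [← mul_pow, hx, one_pow]
    rw [ContinuousMap.add_apply, h₁ x, h₂ x]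
    simp only [eval_add, eval_mul, eval_pow, eval_X, pow_add]
    linear_combination (-(((starRingEnd ℂ) (x:ℂ)) ^ N₁ * R₁.eval (x:ℂ))) * e2 +
      (-(((starRingEnd ℂ) (x:ℂ)) ^ N₂ * R₂.eval (x:ℂ))) * e1
  | mul p q hp hq ihp ihq =>
    obtain ⟨N₁, R₁, h₁⟩ := ihp
    obtain ⟨N₂, R₂, h₂⟩ := ihq
    refine ⟨N₁ + N₂, R₁ * R₂, fun x => ?_⟩
    rw [ContinuousMap.mul_apply, h₁ x, h₂ x]
    simp only [eval_mul, pow_add]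
    ring
  | star p hp ihp =>
    obtain ⟨N, R, h⟩ := ihp
    obtain ⟨R', hR'⟩ := exists_reflect R
    refine ⟨R.natDegree, X ^ N * R', fun x => ?_⟩
    have hx := mul_conj_one x.2
    rw [ContinuousMap.star_apply, h x]
    simp only [Complex.star_def, map_mul, map_pow, Complex.conj_conj, eval_mul, eval_pow, eval_X]
    rw [hR' _ hx]
    ring

lemma approx (f : C(↥(Metric.sphere (0:ℂ) 1), ℂ)) (ε : ℝ) (hε : 0 < ε) :
    ∃ P Q : Polynomial ℂ, ∀ x : ↥(Metric.sphere (0:ℂ) 1),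
      ‖f x - (P.eval (x:ℂ) + (starRingEnd ℂ) ((x:ℂ) * Q.eval (x:ℂ)))‖ ≤ ε := by
  have hc : f ∈ closure ((polynomialFunctions (Metric.sphere (0:ℂ) 1)).starClosure :
      Set C(↥(Metric.sphere (0:ℂ) 1), ℂ)) := by
    have h1 := polynomialFunctions.starClosure_topologicalClosure (Metric.sphere (0:ℂ) 1)
    have h2 : f ∈ (polynomialFunctions (Metric.sphere (0:ℂ) 1)).starClosure.topologicalClosure := by
      rw [h1]; trivial
    rw [← StarSubalgebra.topologicalClosure_coe]
    exact h2
  obtain ⟨g, hgmem, hgd⟩ := Metric.mem_closure_iff.mp hc ε hε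
  obtain ⟨N, R, hNR⟩ := normal_form g hgmem
  obtain ⟨P, Q, hPQ⟩ := exists_split N R
  refine ⟨P, Q, fun x => ?_⟩
  have h1 : f x - (P.eval (x:ℂ) + (starRingEnd ℂ) ((x:ℂ) * Q.eval (x:ℂ))) = f x - g x := by
    rw [hNR x, hPQ _ (mul_conj_one x.2)]
  rw [h1]
  have h2 := ContinuousMap.dist_apply_le_dist (f := f) (g := g) x
  rw [Complex.dist_eq] at h2
  exact h2.trans hgd.le

end RudinAux

set_option maxHeartbeats 1000000 in
/-- Rudin's theorem: a module over the disk algebra satisfying the maximum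
principle consists of holomorphic functions. -/
theorem rudin_module_holomorphic
    (M : Set (ℂ → ℂ))
    (hMcont : ∀ f ∈ M, ContinuousOn f (Metric.closedBall (0 : ℂ) 1))
    (hone : (fun _ : ℂ => (1 : ℂ)) ∈ M)
    (hadd : ∀ f ∈ M, ∀ g ∈ M, f + g ∈ M)
    (hsmul : ∀ (c : ℂ), ∀ f ∈ M, c • f ∈ M)
    (hmod : ∀ a : ℂ → ℂ,
      ContinuousOn a (Metric.closedBall (0 : ℂ) 1) →
      DifferentiableOn ℂ a (Metric.ball (0 : ℂ) 1) →
      ∀ f ∈ M, a * f ∈ M)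
    (hmax : ∀ f ∈ M, ∀ z₀ ∈ Metric.ball (0 : ℂ) 1,
      ‖f z₀‖ ≤
        sSup ((fun z => ‖f z‖) '' Metric.sphere (0 : ℂ) 1)) :
    ∀ f ∈ M, DifferentiableOn ℂ f (Metric.ball (0 : ℂ) 1) := by
  intro f hf
  -- The key estimate, obtained from a Hahn-Banach extension of the evaluation functional.
  have key : ∀ z₀ ∈ Metric.ball (0:ℂ) 1, ∀ (P Q : Polynomial ℂ) (ε : ℝ), 0 ≤ ε →
      (∀ x ∈ Metric.sphere (0:ℂ) 1,
        ‖f x - (P.eval x + (starRingEnd ℂ) (x * Q.eval x))‖ ≤ ε) →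
      ‖f z₀ - P.eval z₀‖ ≤ ε + 2 * ε / (1 - ‖z₀‖ ^ 2) := by
    intro z₀ hz₀ P Q ε hε0 hεbd
    have hz₀1 : ‖z₀‖ < 1 := by
      rw [mem_ball_zero_iff] at hz₀; exact hz₀
    -- the submodule of restrictions of members of M to the circle
    let NN : Submodule ℂ C(↥(Metric.sphere (0:ℂ) 1), ℂ) :=
      { carrier := {g | ∃ F, F ∈ M ∧ ∀ x : ↥(Metric.sphere (0:ℂ) 1), g x = F (x:ℂ)}
        add_mem' := by
          rintro a b ⟨F, hF, ha⟩ ⟨G, hG, hb⟩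
          exact ⟨F + G, hadd F hF G hG, fun x => by
            rw [ContinuousMap.add_apply, ha x, hb x]; rfl⟩
        zero_mem' := ⟨(0:ℂ) • (fun _ => (1:ℂ)), hsmul 0 _ hone, fun x => by
          simp⟩
        smul_mem' := by
          rintro c a ⟨F, hF, ha⟩
          exact ⟨c • F, hsmul c F hF, fun x => by
            rw [ContinuousMap.smul_apply, ha x]; rfl⟩ }
    -- well-definedness of evaluation at z₀
    have veq : ∀ F, F ∈ M → ∀ G, G ∈ M → (∀ x : ℂ, x ∈ Metric.sphere (0:ℂ) 1 → F x = G x) →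
        F z₀ = G z₀ := by
      intro F hF G hG hFG
      have hD : F + (-1 : ℂ) • G ∈ M := hadd F hF _ (hsmul (-1) G hG)
      have h := hmax _ hD z₀ hz₀
      have hsup : sSup ((fun z => ‖(F + (-1:ℂ) • G) z‖) '' Metric.sphere (0:ℂ) 1)
          ≤ 0 := by
        apply Real.sSup_le _ le_rfl
        rintro y ⟨x, hx, rfl⟩
        simp only [Pi.add_apply, Pi.smul_apply, smul_eq_mul, neg_one_mul, hFG x hx]
        simp
      have h2 := le_antisymm (h.trans hsup) (norm_nonneg _)
      simp only [Pi.add_apply, Pi.smul_apply, smul_eq_mul, neg_one_mul] at h2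
      rw [norm_eq_zero] at h2
      linear_combination h2
    have hval : ∀ g : ↥NN, ∃ F, F ∈ M ∧
        ∀ x : ↥(Metric.sphere (0:ℂ) 1), (g : C(↥(Metric.sphere (0:ℂ) 1), ℂ)) x = F (x:ℂ) :=
      fun g => g.2
    choose Ffn hFfnM hFfn using hval
    let φ : ↥NN →ₗ[ℂ] ℂ :=
      { toFun := fun g => Ffn g z₀
        map_add' := by
          intro a b
          have hagree : ∀ x : ℂ, x ∈ Metric.sphere (0:ℂ) 1 →
              Ffn (a + b) x = (Ffn a + Ffn b) x := by
            intro x hx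
            have h1 := hFfn (a + b) ⟨x, hx⟩
            have h2 := hFfn a ⟨x, hx⟩
            have h3 := hFfn b ⟨x, hx⟩
            rw [Submodule.coe_add, ContinuousMap.add_apply] at h1
            rw [Pi.add_apply, ← h2, ← h3, ← h1]
          have h9 := veq _ (hFfnM (a + b)) _ (hadd _ (hFfnM a) _ (hFfnM b)) hagree
          show Ffn (a + b) z₀ = Ffn a z₀ + Ffn b z₀
          rw [h9, Pi.add_apply]
        map_smul' := by
          intro c a
          have hagree : ∀ x : ℂ, x ∈ Metric.sphere (0:ℂ) 1 →
              Ffn (c • a) x = (c • Ffn a) x := by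
            intro x hx
            have h1 := hFfn (c • a) ⟨x, hx⟩
            have h2 := hFfn a ⟨x, hx⟩
            rw [Submodule.coe_smul, ContinuousMap.smul_apply] at h1
            rw [Pi.smul_apply, ← h2, ← h1]
          have h9 := veq _ (hFfnM (c • a)) _ (hsmul c _ (hFfnM a)) hagree
          show Ffn (c • a) z₀ = RingHom.id ℂ c • Ffn a z₀
          rw [h9, Pi.smul_apply]; rfl }
    have hφbd : ∀ g : ↥NN, ‖φ g‖ ≤ 1 * ‖(g : C(↥(Metric.sphere (0:ℂ) 1), ℂ))‖ := by
      intro g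
      rw [one_mul]
      refine (hmax _ (hFfnM g) z₀ hz₀).trans (Real.sSup_le ?_ (norm_nonneg _))
      rintro y ⟨x, hx, rfl⟩
      simp only
      rw [← hFfn g ⟨x, hx⟩]
      exact (g : C(↥(Metric.sphere (0:ℂ) 1), ℂ)).norm_coe_le_norm ⟨x, hx⟩
    let φL := LinearMap.mkContinuous φ 1 hφbd
    obtain ⟨Λ, hΛe, hΛn⟩ := exists_extension_norm_eq NN φL
    have hΛ1 : ‖Λ‖ ≤ 1 := by
      rw [hΛn]; exact LinearMap.mkContinuous_norm_le φ zero_le_one hφbd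
    -- Λ evaluates members of M at z₀
    have ΛM : ∀ (F : ℂ → ℂ), F ∈ M → ∀ g : C(↥(Metric.sphere (0:ℂ) 1), ℂ),
        (∀ x : ↥(Metric.sphere (0:ℂ) 1), g x = F (x:ℂ)) → Λ g = F z₀ := by
      intro F hFM g hg
      have hgNN : g ∈ NN := ⟨F, hFM, hg⟩
      have h1 := hΛe ⟨g, hgNN⟩
      rw [h1]
      show Ffn ⟨g, hgNN⟩ z₀ = F z₀
      refine veq _ (hFfnM _) _ hFM ?_
      intro x hx
      rw [← hFfn ⟨g, hgNN⟩ ⟨x, hx⟩]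
      exact hg ⟨x, hx⟩
    have hΛconst : ∀ c : ℂ, Λ (ContinuousMap.const _ c) = c := by
      intro c
      have hm : (c • fun _ : ℂ => (1:ℂ)) ∈ M := hsmul c _ hone
      have h1 := ΛM _ hm (ContinuousMap.const _ c) (fun x => by simp)
      simpa using h1
    -- uniform norm bound helper
    have hSnorm : ∀ (g : C(↥(Metric.sphere (0:ℂ) 1), ℂ)) (c : ℝ), 0 ≤ c →
        (∀ x : ↥(Metric.sphere (0:ℂ) 1), ‖g x‖ ≤ c) → ‖g‖ ≤ c := by
      intro g c hc h
      rw [ContinuousMap.norm_le g hc]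
      intro x; exact h x
    -- Λ is real on real functions
    have hreal : ∀ g : C(↥(Metric.sphere (0:ℂ) 1), ℂ), (∀ x, (g x).im = 0) → (Λ g).im = 0 := by
      intro g hg
      have hb : ∀ t : ℝ, (Λ g).re ^ 2 + ((Λ g).im + t) ^ 2 ≤ ‖g‖ ^ 2 + t ^ 2 := by
        intro t
        have h1 : Λ (g + ContinuousMap.const _ ((t:ℂ) * Complex.I))
            = Λ g + (t:ℂ) * Complex.I := by
          rw [map_add, hΛconst]
        have h2 : ‖g + ContinuousMap.const _ ((t:ℂ) * Complex.I)‖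
            ≤ Real.sqrt (‖g‖^2 + t^2) := by
          apply hSnorm _ _ (Real.sqrt_nonneg _)
          intro x
          rw [ContinuousMap.add_apply, ContinuousMap.const_apply]
          have him : ((g x) + (t:ℂ) * Complex.I).im = t := by simp [hg x]
          have hre : ((g x) + (t:ℂ) * Complex.I).re = (g x).re := by simp
          rw [Complex.norm_def, Complex.normSq_apply, hre, him]
          apply Real.sqrt_le_sqrt
          have h4 := Complex.abs_re_le_norm (g x)
          have h5 : ‖g x‖ ≤ ‖g‖ := by
            exact g.norm_coe_le_norm x
          have h6 := norm_nonneg (g x)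
          nlinarith [abs_nonneg ((g x).re), le_abs_self ((g x).re), neg_abs_le ((g x).re)]
        have h6 : ‖Λ (g + ContinuousMap.const _ ((t:ℂ) * Complex.I))‖
            ≤ Real.sqrt (‖g‖^2 + t^2) := by
          calc ‖Λ (g + ContinuousMap.const _ ((t:ℂ) * Complex.I))‖
              ≤ ‖Λ‖ * ‖g + ContinuousMap.const _ ((t:ℂ) * Complex.I)‖ := Λ.le_opNorm _
            _ ≤ 1 * Real.sqrt (‖g‖^2 + t^2) := mul_le_mul hΛ1 h2 (norm_nonneg _) zero_le_one
            _ = Real.sqrt (‖g‖^2 + t^2) := one_mul _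
        rw [h1] at h6
        have h7 : ‖Λ g + (t:ℂ) * Complex.I‖^2 = (Λ g).re^2 + ((Λ g).im + t)^2 := by
          rw [Complex.sq_norm, Complex.normSq_apply]
          simp
          ring
        have h8 := Real.sq_sqrt (by positivity : (0:ℝ) ≤ ‖g‖^2 + t^2)
        nlinarith [norm_nonneg (Λ g + (t:ℂ) * Complex.I), Real.sqrt_nonneg (‖g‖^2 + t^2)]
      by_contra hβ
      have h10 := hb ((‖g‖^2 + 1) / (2 * (Λ g).im))
      have h11 : (Λ g).im * ((‖g‖^2 + 1) / (2 * (Λ g).im)) = (‖g‖^2 + 1) / 2 := by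
        field_simp
      nlinarith [sq_nonneg (Λ g).re, sq_nonneg (Λ g).im]
    -- Λ commutes with conjugation
    have hconj : ∀ g : C(↥(Metric.sphere (0:ℂ) 1), ℂ),
        Λ (star g) = (starRingEnd ℂ) (Λ g) := by
      intro g
      have hu : (Λ (g + star g)).im = 0 := by
        apply hreal
        intro x
        rw [ContinuousMap.add_apply, ContinuousMap.star_apply]
        simp [Complex.star_def]
      have hv : (Λ ((-Complex.I) • (g - star g))).im = 0 := by
        apply hreal
        intro x
        rw [ContinuousMap.smul_apply, ContinuousMap.sub_apply, ContinuousMap.star_apply]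
        simp [Complex.star_def, smul_eq_mul, Complex.mul_im]
      rw [map_add] at hu
      rw [map_smul, smul_eq_mul, map_sub] at hv
      simp only [Complex.add_im] at hu
      simp only [Complex.mul_im, Complex.neg_re, Complex.I_re, Complex.neg_im, Complex.I_im,
        Complex.sub_re, Complex.sub_im, neg_zero, zero_mul, mul_comm] at hv
      apply Complex.ext
      · simp only [Complex.conj_re]
        nlinarith [hv]
      · simp only [Complex.conj_im]
        linarith [hu]
    -- polynomial continuous maps
    let pcm : Polynomial ℂ → C(↥(Metric.sphere (0:ℂ) 1), ℂ) := fun Pp =>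
      ⟨fun x => Pp.eval (x:ℂ), (Pp.continuous).comp continuous_subtype_val⟩
    have hpolyM : ∀ Pp : Polynomial ℂ, (fun z : ℂ => Pp.eval z) ∈ M := by
      intro Pp
      have h1 := hmod (fun z => Pp.eval z) (Pp.continuous).continuousOn
        (Pp.differentiable).differentiableOn _ hone
      have he : ((fun z : ℂ => Pp.eval z) * fun _ : ℂ => (1:ℂ)) = fun z : ℂ => Pp.eval z := by
        funext z; simp
      rwa [he] at h1
    have hΛpoly : ∀ Pp : Polynomial ℂ, Λ (pcm Pp) = Pp.eval z₀ :=
      fun Pp => ΛM _ (hpolyM Pp) _ (fun x => rfl)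
    have hΛcpoly : ∀ Qp : Polynomial ℂ, Λ (star (pcm Qp)) = (starRingEnd ℂ) (Qp.eval z₀) :=
      fun Qp => by rw [hconj, hΛpoly]
    -- members of M restricted
    have hXfM : ((fun z : ℂ => z) * f) ∈ M :=
      hmod _ continuous_id.continuousOn differentiable_id.differentiableOn f hf
    have hFgc : Continuous (fun x : ↥(Metric.sphere (0:ℂ) 1) => f (x:ℂ)) :=
      ((hMcont f hf).mono Metric.sphere_subset_closedBall).restrict
    let Fg : C(↥(Metric.sphere (0:ℂ) 1), ℂ) := ⟨fun x => f (x:ℂ), hFgc⟩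
    let FXg : C(↥(Metric.sphere (0:ℂ) 1), ℂ) :=
      ⟨fun x => (x:ℂ) * f (x:ℂ), continuous_subtype_val.mul hFgc⟩
    have hΛf : Λ Fg = f z₀ := ΛM f hf Fg (fun x => rfl)
    have hΛXf : Λ FXg = z₀ * f z₀ := by
      have h1 := ΛM _ hXfM FXg (fun x => rfl)
      simpa using h1
    -- estimate A
    have bdA : ‖Fg - (pcm P + star (pcm (X * Q)))‖ ≤ ε := by
      apply hSnorm _ _ hε0
      intro x
      have he : (Fg - (pcm P + star (pcm (X * Q)))) x
          = f (x:ℂ) - (P.eval (x:ℂ) + (starRingEnd ℂ) ((x:ℂ) * Q.eval (x:ℂ))) := by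
        simp [Fg, pcm, Complex.star_def]
      rw [he]
      exact hεbd _ x.2
    have hΛp1 : Λ (pcm P + star (pcm (X * Q)))
        = P.eval z₀ + (starRingEnd ℂ) (z₀ * Q.eval z₀) := by
      rw [map_add, hΛpoly, hΛcpoly]
      simp
    have estA : ‖f z₀ - (P.eval z₀ + (starRingEnd ℂ) (z₀ * Q.eval z₀))‖ ≤ ε := by
      rw [← hΛf, ← hΛp1, ← map_sub]
      calc ‖Λ (Fg - (pcm P + star (pcm (X * Q))))‖
          ≤ ‖Λ‖ * ‖Fg - (pcm P + star (pcm (X * Q)))‖ := Λ.le_opNorm _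
        _ ≤ 1 * ε := mul_le_mul hΛ1 bdA (norm_nonneg _) zero_le_one
        _ = ε := one_mul _
    -- estimate B
    have bdB : ‖FXg - (pcm (X * P) + star (pcm Q))‖ ≤ ε := by
      apply hSnorm _ _ hε0
      intro x
      have hx1 := RudinAux.mul_conj_one x.2
      have hnx : ‖(x:ℂ)‖ = 1 := by
        exact mem_sphere_zero_iff_norm.mp x.2
      have he : (FXg - (pcm (X * P) + star (pcm Q))) x
          = (x:ℂ) * (f (x:ℂ) - (P.eval (x:ℂ) + (starRingEnd ℂ) ((x:ℂ) * Q.eval (x:ℂ)))) := by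
        simp only [FXg, pcm, ContinuousMap.sub_apply, ContinuousMap.add_apply,
          ContinuousMap.star_apply, Complex.star_def, ContinuousMap.coe_mk, eval_mul, eval_X,
          map_mul]
        linear_combination ((starRingEnd ℂ) (Q.eval (x:ℂ))) * hx1
      rw [he, norm_mul, hnx, one_mul]
      exact hεbd _ x.2
    have hΛp2 : Λ (pcm (X * P) + star (pcm Q))
        = z₀ * P.eval z₀ + (starRingEnd ℂ) (Q.eval z₀) := by
      rw [map_add, hΛpoly, hΛcpoly]
      simp
    have estB : ‖z₀ * f z₀ - (z₀ * P.eval z₀ + (starRingEnd ℂ) (Q.eval z₀))‖ ≤ ε := by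
      rw [← hΛXf, ← hΛp2, ← map_sub]
      calc ‖Λ (FXg - (pcm (X * P) + star (pcm Q)))‖
          ≤ ‖Λ‖ * ‖FXg - (pcm (X * P) + star (pcm Q))‖ := Λ.le_opNorm _
        _ ≤ 1 * ε := mul_le_mul hΛ1 bdB (norm_nonneg _) zero_le_one
        _ = ε := one_mul _
    -- combine
    have hpos : (0:ℝ) < 1 - ‖z₀‖ ^ 2 := by nlinarith [norm_nonneg z₀]
    have hid : z₀ * (f z₀ - (P.eval z₀ + (starRingEnd ℂ) (z₀ * Q.eval z₀)))
        - (z₀ * f z₀ - (z₀ * P.eval z₀ + (starRingEnd ℂ) (Q.eval z₀)))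
        = ((1:ℂ) - z₀ * (starRingEnd ℂ) z₀) * (starRingEnd ℂ) (Q.eval z₀) := by
      simp only [map_mul]; ring
    have h2 : ‖(1:ℂ) - z₀ * (starRingEnd ℂ) z₀‖ = 1 - ‖z₀‖ ^ 2 := by
      rw [Complex.mul_conj, Complex.normSq_eq_norm_sq]
      rw [show (1:ℂ) - (↑(‖z₀‖ ^ 2) : ℂ) = ((1 - ‖z₀‖ ^ 2 : ℝ) : ℂ) by
        push_cast; ring]
      rw [Complex.norm_real, Real.norm_eq_abs, abs_of_pos hpos]
    have hQbd : (1 - ‖z₀‖ ^ 2) * ‖Q.eval z₀‖ ≤ 2 * ε := by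
      have h1 : ‖z₀ * (f z₀ - (P.eval z₀ + (starRingEnd ℂ) (z₀ * Q.eval z₀)))
          - (z₀ * f z₀ - (z₀ * P.eval z₀ + (starRingEnd ℂ) (Q.eval z₀)))‖ ≤ 2 * ε := by
        calc ‖z₀ * (f z₀ - (P.eval z₀ + (starRingEnd ℂ) (z₀ * Q.eval z₀)))
              - (z₀ * f z₀ - (z₀ * P.eval z₀ + (starRingEnd ℂ) (Q.eval z₀)))‖
            ≤ ‖z₀ * (f z₀ - (P.eval z₀ + (starRingEnd ℂ) (z₀ * Q.eval z₀)))‖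
              + ‖z₀ * f z₀ - (z₀ * P.eval z₀ + (starRingEnd ℂ) (Q.eval z₀))‖ :=
              norm_sub_le _ _
          _ ≤ ‖z₀‖ * ε + ε := by
              rw [norm_mul]
              gcongr
          _ ≤ 1 * ε + ε := by nlinarith [norm_nonneg z₀]
          _ = 2 * ε := by ring
      rw [hid] at h1
      rw [norm_mul, h2, Complex.norm_conj] at h1
      exact h1
    have hQ2 : ‖Q.eval z₀‖ ≤ 2 * ε / (1 - ‖z₀‖ ^ 2) := by
      rw [le_div_iff₀ hpos]
      linarith [hQbd]
    have h3 : f z₀ - P.eval z₀ = (f z₀ - (P.eval z₀ + (starRingEnd ℂ) (z₀ * Q.eval z₀)))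
        + (starRingEnd ℂ) (z₀ * Q.eval z₀) := by ring
    rw [h3]
    have habs : ‖(starRingEnd ℂ) (z₀ * Q.eval z₀)‖
        = ‖z₀‖ * ‖Q.eval z₀‖ := by
      rw [Complex.norm_conj, norm_mul]
    calc ‖(f z₀ - (P.eval z₀ + (starRingEnd ℂ) (z₀ * Q.eval z₀)))
          + (starRingEnd ℂ) (z₀ * Q.eval z₀)‖
        ≤ ‖f z₀ - (P.eval z₀ + (starRingEnd ℂ) (z₀ * Q.eval z₀))‖
          + ‖(starRingEnd ℂ) (z₀ * Q.eval z₀)‖ := norm_add_le _ _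
      _ ≤ ε + ‖z₀‖ * ‖Q.eval z₀‖ := by
          rw [habs]
          exact add_le_add estA le_rfl
      _ ≤ ε + 2 * ε / (1 - ‖z₀‖ ^ 2) := by
          have h5 : ‖z₀‖ * ‖Q.eval z₀‖ ≤ ‖Q.eval z₀‖ :=
            mul_le_of_le_one_left (norm_nonneg _) hz₀1.le
          linarith [hQ2]
  -- Assembly: uniform polynomial approximation on smaller balls
  intro z₀ hz₀
  have hz : ‖z₀‖ < 1 := by
    rw [mem_ball_zero_iff] at hz₀; exact hz₀
  have h0z := norm_nonneg z₀
  set r : ℝ := (1 + ‖z₀‖) / 2 with hr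
  have hr1 : r < 1 := by rw [hr]; linarith
  have hzr : ‖z₀‖ < r := by rw [hr]; linarith
  have hr0 : 0 < r := by rw [hr]; linarith
  have hFgc : Continuous (fun x : ↥(Metric.sphere (0:ℂ) 1) => f (x:ℂ)) :=
    ((hMcont f hf).mono Metric.sphere_subset_closedBall).restrict
  have happrox : ∀ n : ℕ, ∃ P Q : Polynomial ℂ, ∀ x ∈ Metric.sphere (0:ℂ) 1,
      ‖f x - (P.eval x + (starRingEnd ℂ) (x * Q.eval x))‖ ≤ 1 / (n + 1) := by
    intro n
    obtain ⟨P, Q, h⟩ := RudinAux.approx ⟨fun x => f (x:ℂ), hFgc⟩ (1 / (n + 1)) (by positivity)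
    exact ⟨P, Q, fun x hx => h ⟨x, hx⟩⟩
  choose Ps Qs hPQ using happrox
  have hrsq : (0:ℝ) < 1 - r ^ 2 := by nlinarith
  have hCr : (0:ℝ) < 1 + 2 / (1 - r ^ 2) := by positivity
  have hunif : TendstoUniformlyOn (fun n z => (Ps n).eval z) f Filter.atTop
      (Metric.ball (0:ℂ) r) := by
    rw [Metric.tendstoUniformlyOn_iff]
    intro δ hδ
    obtain ⟨N, hN⟩ := exists_nat_one_div_lt (div_pos hδ hCr)
    refine Filter.eventually_atTop.mpr ⟨N, fun n hn => fun x hx => ?_⟩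
    have hxa : ‖x‖ < r := by
      rw [mem_ball_zero_iff] at hx; exact hx
    have hx1 : x ∈ Metric.ball (0:ℂ) 1 := by
      rw [mem_ball_zero_iff]; linarith
    have hx0 := norm_nonneg x
    have hxsq : (0:ℝ) < 1 - ‖x‖ ^ 2 := by nlinarith
    have hkey := key x hx1 (Ps n) (Qs n) (1 / (n + 1)) (by positivity) (hPQ n)
    rw [Complex.dist_eq]
    have hmono : (1:ℝ) / (n + 1) + 2 * (1 / (n + 1)) / (1 - ‖x‖ ^ 2)
        ≤ (1:ℝ) / (N + 1) * (1 + 2 / (1 - r ^ 2)) := by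
      have h3 : (1:ℝ) / (n + 1) ≤ 1 / (N + 1) := by
        apply one_div_le_one_div_of_le (by positivity)
        exact_mod_cast by omega
      have h4 : 2 * ((1:ℝ) / (n + 1)) / (1 - ‖x‖ ^ 2)
          ≤ 2 * ((1:ℝ) / (N + 1)) / (1 - r ^ 2) := by
        apply div_le_div₀ (by positivity) (by linarith) hrsq
        nlinarith
      calc (1:ℝ) / (n + 1) + 2 * (1 / (n + 1)) / (1 - ‖x‖ ^ 2)
          ≤ 1 / (N + 1) + 2 * ((1:ℝ) / (N + 1)) / (1 - r ^ 2) := by linarith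
        _ = (1:ℝ) / (N + 1) * (1 + 2 / (1 - r ^ 2)) := by ring
    have hfin : (1:ℝ) / (N + 1) * (1 + 2 / (1 - r ^ 2)) < δ :=
      (lt_div_iff₀ hCr).mp hN
    exact lt_of_le_of_lt (hkey.trans hmono) hfin
  have hdiff : DifferentiableOn ℂ f (Metric.ball (0:ℂ) r) :=
    (hunif.tendstoLocallyUniformlyOn).differentiableOn
      (Filter.Eventually.of_forall fun n => (Polynomial.differentiable (Ps n)).differentiableOn)
      Metric.isOpen_ball
  have hat : DifferentiableAt ℂ f z₀ :=
    hdiff.differentiableAt (Metric.isOpen_ball.mem_nhds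
      (by rw [mem_ball_zero_iff]; exact hzr))
  exact hat.differentiableWithinAt
end

section
/- Let φ : ℂ → ℂ be continuous on the punctured closed unit disk Δ \ {0}, holomorphic on the punctured open unit disk {z : 0 < |z| < 1}, and suppose φ has either a pole or a removable singularity at 0, i.e. there exists k ∈ ℕ such that z ↦ z^k·φ(z) extends holomorphically across 0. Let γ = {(ζ, φ(ζ)) : |ζ| = 1} and Σ = {(ζ, φ(ζ)) : 0 < |ζ| ≤ 1} in ℂ². Then Σ is contained in the projective hull of γ. -/
/-- The projective hull of a compact set X ⊆ ℂ²: points x such that for some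
constant C ≥ 0, |P(x)| ≤ C^d · sup_X |P| for every polynomial P of total degree ≤ d. -/
def projectiveHull (X : Set (ℂ × ℂ)) : Set (ℂ × ℂ) :=
  {x | ∃ C : ℝ, 0 ≤ C ∧ ∀ (d : ℕ) (P : MvPolynomial (Fin 2) ℂ), P.totalDegree ≤ d →
    ‖MvPolynomial.eval ![x.1, x.2] P‖ ≤
      C ^ d * sSup ((fun y : ℂ × ℂ => ‖MvPolynomial.eval ![y.1, y.2] P‖) '' X)}

/-- Proposition 3: if φ is holomorphic on the punctured open disk, continuous on the
punctured closed disk, with a pole or removable singularity at 0, then its graph Σ over the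
punctured closed disk is contained in the projective hull of its graph γ over the circle. -/
theorem graph_subset_projectiveHull
    (φ : ℂ → ℂ)
    (hcont : ContinuousOn φ (Metric.closedBall (0 : ℂ) 1 \ {0}))
    (hdiff : DifferentiableOn ℂ φ (Metric.ball (0 : ℂ) 1 \ {0}))
    (hpole : ∃ (k : ℕ) (g : ℂ → ℂ), DifferentiableOn ℂ g (Metric.ball (0 : ℂ) 1) ∧
      ∀ z ∈ Metric.ball (0 : ℂ) 1 \ {0}, g z = z ^ k * φ z) :
    (fun ζ => (ζ, φ ζ)) '' (Metric.closedBall (0 : ℂ) 1 \ {0}) ⊆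
      projectiveHull ((fun ζ => (ζ, φ ζ)) '' Metric.sphere (0 : ℂ) 1) := by
    classical
  obtain ⟨k, g, hgdiff, hg⟩ := hpole
  rintro _ ⟨ζ₀, hζ₀, rfl⟩
  obtain ⟨hζ₀ball, hζ₀ne⟩ := hζ₀
  have hζ₀ne' : ζ₀ ≠ 0 := by simpa using hζ₀ne
  have habs0 : (0:ℝ) < ‖ζ₀‖ := by
    simpa [norm_pos_iff] using hζ₀ne'
  have habs1 : ‖ζ₀‖ ≤ 1 := by
    simpa [Complex.dist_eq] using Metric.mem_closedBall.1 hζ₀ball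
  refine ⟨max 1 ((‖ζ₀‖)⁻¹ ^ k), le_trans zero_le_one (le_max_left _ _), ?_⟩
  intro d P hPd
  set C : ℝ := max 1 ((‖ζ₀‖)⁻¹ ^ k) with hC
  -- continuity of evaluation along the graph
  have hev : ContinuousOn (fun z => MvPolynomial.eval ![z, φ z] P)
      (Metric.closedBall (0 : ℂ) 1 \ {0}) := by
    apply (MvPolynomial.continuous_eval (p := P)).comp_continuousOn
    rw [continuousOn_pi]
    intro i
    fin_cases i
    · simpa using (continuousOn_id' (α := ℂ) (s := Metric.closedBall (0 : ℂ) 1 \ {0}))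
    · simpa using hcont
  -- the sup over the circle
  set M : ℝ := sSup ((fun y : ℂ × ℂ => ‖MvPolynomial.eval ![y.1, y.2] P‖) ''
      ((fun ζ => (ζ, φ ζ)) '' Metric.sphere (0 : ℂ) 1)) with hM
  have hsph : Metric.sphere (0 : ℂ) 1 ⊆ Metric.closedBall (0 : ℂ) 1 \ {0} := by
    intro z hz
    have hz1 : ‖z‖ = 1 := by simpa [Complex.dist_eq] using hz
    constructor
    · simpa [Complex.dist_eq] using hz1.le
    · simp only [Set.mem_singleton_iff]
      intro h; rw [h] at hz1; simp at hz1
  have himg : ((fun y : ℂ × ℂ => ‖MvPolynomial.eval ![y.1, y.2] P‖) ''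
      ((fun ζ => (ζ, φ ζ)) '' Metric.sphere (0 : ℂ) 1)) =
      (fun z => ‖MvPolynomial.eval ![z, φ z] P‖) '' Metric.sphere (0 : ℂ) 1 := by
    rw [← Set.image_comp]; rfl
  have hMbdd : BddAbove ((fun y : ℂ × ℂ => ‖MvPolynomial.eval ![y.1, y.2] P‖) ''
      ((fun ζ => (ζ, φ ζ)) '' Metric.sphere (0 : ℂ) 1)) := by
    rw [himg]
    exact ((isCompact_sphere (0:ℂ) 1).image_of_continuousOn
      (continuous_norm.comp_continuousOn (hev.mono hsph))).bddAbove
  have hMle : ∀ z ∈ Metric.sphere (0 : ℂ) 1,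
      ‖MvPolynomial.eval ![z, φ z] P‖ ≤ M := by
    intro z hz
    exact le_csSup hMbdd ⟨(z, φ z), ⟨z, hz, rfl⟩, rfl⟩
  have hMnn : 0 ≤ M := by
    have h1 : (1:ℂ) ∈ Metric.sphere (0:ℂ) 1 := by simp
    exact le_trans (norm_nonneg _) (hMle 1 h1)
  -- the auxiliary holomorphic function
  set G : ℂ → ℂ := fun z => ∑ m ∈ P.support,
    MvPolynomial.coeff m P * z ^ (m 0 + k * (d - m 1)) * g z ^ (m 1) with hGdef
  have hm1le : ∀ m ∈ P.support, m 1 ≤ d := by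
    intro m hm
    refine le_trans ?_ (le_trans (MvPolynomial.le_totalDegree hm) hPd)
    rcases eq_or_ne (m 1) 0 with h | h
    · simp [h]
    · have : m 1 ≤ ∑ i ∈ m.support, m i :=
        Finset.single_le_sum (fun i _ => Nat.zero_le (m i)) (Finsupp.mem_support_iff.2 h)
      simpa [Finsupp.sum] using this
  have hGeq : ∀ z ∈ Metric.ball (0 : ℂ) 1 \ {0},
      G z = z ^ (k * d) * MvPolynomial.eval ![z, φ z] P := by
    intro z hz
    rw [MvPolynomial.eval_eq', Finset.mul_sum, hGdef]
    refine Finset.sum_congr rfl fun m hm => ?_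
    rw [hg z hz]
    have hprod : (∏ i : Fin 2, (![z, φ z] : Fin 2 → ℂ) i ^ m i) = z ^ (m 0) * φ z ^ (m 1) := by
      rw [Fin.prod_univ_two]; simp
    rw [hprod, mul_pow, ← pow_mul]
    have hzpow : z ^ (m 0 + k * (d - m 1)) * z ^ (k * m 1) = z ^ (k * d) * z ^ (m 0) := by
      rw [← pow_add, ← pow_add]
      congr 1
      rw [add_assoc, ← Nat.left_distrib, Nat.sub_add_cancel (hm1le m hm), Nat.add_comm]
    linear_combination (MvPolynomial.coeff m P * φ z ^ m 1) * hzpow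
  have hGdiff : DifferentiableOn ℂ G (Metric.ball (0 : ℂ) 1) := by
    apply DifferentiableOn.fun_sum
    intro m hm
    exact ((differentiableOn_const _).mul (differentiable_pow _).differentiableOn).mul
      (hgdiff.pow _)
  set F : ℂ → ℂ := fun z => if z = 0 then G 0 else z ^ (k * d) * MvPolynomial.eval ![z, φ z] P
    with hFdef
  have hFG : ∀ z ∈ Metric.ball (0 : ℂ) 1, F z = G z := by
    intro z hz
    rcases eq_or_ne z 0 with rfl | h
    · simp [hFdef]
    · rw [hFdef]
      simp only [if_neg h]
      exact (hGeq z ⟨hz, h⟩).symm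
  have hFdiff : DifferentiableOn ℂ F (Metric.ball (0 : ℂ) 1) :=
    hGdiff.congr hFG
  have hFcont : ContinuousOn F (Metric.closedBall (0 : ℂ) 1) := by
    intro x hx
    rcases eq_or_ne x 0 with rfl | hxne
    · have : ContinuousAt F 0 := by
        have hGc : ContinuousAt G 0 :=
          (hGdiff.differentiableAt (Metric.isOpen_ball.mem_nhds (by simp))).continuousAt
        apply hGc.congr
        filter_upwards [Metric.isOpen_ball.mem_nhds (show (0:ℂ) ∈ Metric.ball (0:ℂ) 1 by simp)]
          with z hz
        exact (hFG z hz).symm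
      exact this.continuousWithinAt
    · have hF' : ContinuousOn F (Metric.closedBall (0 : ℂ) 1 \ {0}) := by
        apply ContinuousOn.congr (f := fun z => z ^ (k*d) * MvPolynomial.eval ![z, φ z] P)
        · exact ((continuous_pow _).continuousOn).mul hev
        · intro z hz
          have hzne : z ≠ 0 := by simpa using hz.2
          rw [hFdef]; simp [hzne]
      refine (hF' x ⟨hx, hxne⟩).mono_of_mem_nhdsWithin ?_
      rw [Set.diff_eq]
      exact Filter.inter_mem self_mem_nhdsWithin
        (mem_nhdsWithin_of_mem_nhds (isOpen_compl_singleton.mem_nhds hxne))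
  have hmax : ∀ z ∈ closure (Metric.ball (0:ℂ) 1), ‖F z‖ ≤ M := by
    apply Complex.norm_le_of_forall_mem_frontier_norm_le Metric.isBounded_ball
    · exact ⟨hFdiff, by rwa [closure_ball (0:ℂ) one_ne_zero]⟩
    · intro z hz
      rw [frontier_ball (0:ℂ) one_ne_zero] at hz
      have hz1 : ‖z‖ = 1 := by simpa [Complex.dist_eq] using hz
      have hzne : z ≠ 0 := fun h => by rw [h] at hz1; simp at hz1
      rw [hFdef]
      simp only [if_neg hzne]
      rw [norm_mul, norm_pow, hz1, one_pow, one_mul]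
      exact hMle z hz
  have hFζ : ‖F ζ₀‖ ≤ M := by
    apply hmax
    rwa [closure_ball (0:ℂ) one_ne_zero]
  have hFval : F ζ₀ = ζ₀ ^ (k * d) * MvPolynomial.eval ![ζ₀, φ ζ₀] P := by
    rw [hFdef]; simp [hζ₀ne']
  rw [hFval, norm_mul, norm_pow] at hFζ
  have hkey : ‖MvPolynomial.eval ![ζ₀, φ ζ₀] P‖ ≤
      (‖ζ₀‖)⁻¹ ^ (k * d) * M := by
    have h1 : ‖MvPolynomial.eval ![ζ₀, φ ζ₀] P‖ =
        (‖ζ₀‖)⁻¹ ^ (k * d) *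
          (‖ζ₀‖ ^ (k * d) * ‖MvPolynomial.eval ![ζ₀, φ ζ₀] P‖) := by
      rw [← mul_assoc, inv_pow, inv_mul_cancel₀ (by positivity), one_mul]
    rw [h1]
    exact mul_le_mul_of_nonneg_left hFζ (by positivity)
  refine le_trans hkey ?_
  apply mul_le_mul_of_nonneg_right _ hMnn
  calc (‖ζ₀‖)⁻¹ ^ (k * d) = ((‖ζ₀‖)⁻¹ ^ k) ^ d := by rw [pow_mul]
    _ ≤ C ^ d := pow_le_pow_left₀ (by positivity) (le_max_right _ _) d
end

section
/- Let φ : ℂ → ℂ be holomorphic on the punctured open unit disk {z : 0 < |z| < 1}, continuous on Δ \ {0}, and suppose that for some k ∈ ℕ the function z ↦ z^k·φ(z) extends to a bounded holomorphic function on the open unit disk (so φ has a pole of order at most k, or a removable singularity, at 0). Let d ∈ ℕ and let P be a polynomial in two complex variables of total degree at most d with sup_{|ζ|=1} |P(ζ, φ(ζ))| ≤ 1. Then for every ζ₀ with 0 < |ζ₀| < 1, one has |P(ζ₀, φ(ζ₀))| ≤ (1/(1 − |ζ₀|)) · (1/|ζ₀|^k)^d. -/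
open MvPolynomial Metric Set


/-- The quantitative estimate in Proposition 3: if φ is holomorphic on the punctured open
disk, continuous on the punctured closed disk, and z^k φ(z) extends to a bounded holomorphic
function on the open disk, then for any polynomial P of total degree ≤ d bounded by 1 on the
graph over the circle, |P(ζ₀, φ(ζ₀))| ≤ (1/(1-|ζ₀|)) · (1/|ζ₀|^k)^d for 0 < |ζ₀| < 1. -/
theorem projective_hull_estimate
    (φ : ℂ → ℂ) (k : ℕ) (g : ℂ → ℂ)
    (hdiff : DifferentiableOn ℂ φ (Metric.ball (0 : ℂ) 1 \ {0}))
    (hcont : ContinuousOn φ (Metric.closedBall (0 : ℂ) 1 \ {0}))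
    (hg : DifferentiableOn ℂ g (Metric.ball (0 : ℂ) 1))
    (hgbdd : ∃ B : ℝ, ∀ z ∈ Metric.ball (0 : ℂ) 1, ‖g z‖ ≤ B)
    (hgeq : ∀ z ∈ Metric.ball (0 : ℂ) 1 \ {0}, g z = z ^ k * φ z)
    (d : ℕ) (P : MvPolynomial (Fin 2) ℂ) (hPdeg : P.totalDegree ≤ d)
    (hPbound : ∀ ζ ∈ Metric.sphere (0 : ℂ) 1,
      ‖MvPolynomial.eval ![ζ, φ ζ] P‖ ≤ 1) :
    ∀ ζ₀ : ℂ, 0 < ‖ζ₀‖ → ‖ζ₀‖ < 1 →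
      ‖MvPolynomial.eval ![ζ₀, φ ζ₀] P‖ ≤
        (1 / (1 - ‖ζ₀‖)) * (1 / ‖ζ₀‖ ^ k) ^ d := by
  -- degree bound for each exponent
  have hs1 : ∀ s ∈ P.support, s 1 ≤ d := by
    intro s hs
    have h1 : (s.sum fun _ e => e) ≤ d := (MvPolynomial.le_totalDegree hs).trans hPdeg
    have h2 : s 1 ≤ s.sum fun _ e => e := by
      rw [Finsupp.sum_fintype _ _ (fun _ => rfl), Fin.sum_univ_two]
      omega
    omega
  -- the evaluation expanded
  have heval : ∀ z : ℂ, MvPolynomial.eval ![z, φ z] P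
      = ∑ s ∈ P.support, P.coeff s * (z ^ s 0 * φ z ^ s 1) := by
    intro z
    rw [MvPolynomial.eval_eq']
    refine Finset.sum_congr rfl fun s _ => ?_
    rw [Fin.prod_univ_two]
    simp [Matrix.cons_val_zero, Matrix.cons_val_one]
  set F : ℂ → ℂ := fun z => ∑ s ∈ P.support, P.coeff s * z ^ (s 0 + k * (d - s 1)) * g z ^ s 1
    with hF
  set G : ℂ → ℂ := fun z => z ^ (k * d) * MvPolynomial.eval ![z, φ z] P with hG
  set Ft : ℂ → ℂ := fun z => if z = 0 then F 0 else G z with hFt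
  -- F = G on ball \ {0}
  have hFG : ∀ z ∈ Metric.ball (0 : ℂ) 1 \ {0}, F z = G z := by
    intro z hz
    show (∑ s ∈ P.support, P.coeff s * z ^ (s 0 + k * (d - s 1)) * g z ^ s 1)
      = z ^ (k * d) * MvPolynomial.eval ![z, φ z] P
    rw [heval, Finset.mul_sum]
    refine Finset.sum_congr rfl fun s hs => ?_
    rw [hgeq z hz, mul_pow, ← pow_mul]
    have : s 0 + k * (d - s 1) + k * s 1 = k * d + s 0 := by
      rw [Nat.add_assoc, ← Nat.mul_add, Nat.sub_add_cancel (hs1 s hs), Nat.add_comm]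
    calc P.coeff s * z ^ (s 0 + k * (d - s 1)) * (z ^ (k * s 1) * φ z ^ s 1)
        = P.coeff s * z ^ (s 0 + k * (d - s 1) + k * s 1) * φ z ^ s 1 := by
          rw [pow_add]; ring
      _ = z ^ (k * d) * (P.coeff s * (z ^ s 0 * φ z ^ s 1)) := by rw [this, pow_add]; ring
  -- Ft = F on ball
  have hFtF : Set.EqOn Ft F (Metric.ball (0 : ℂ) 1) := by
    intro z hz
    by_cases h0 : z = 0
    · simp [hFt, h0]
    · rw [hFt]; simp only [if_neg h0]; exact (hFG z ⟨hz, h0⟩).symm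
  have hFdiff : DifferentiableOn ℂ F (Metric.ball (0 : ℂ) 1) := by
    apply DifferentiableOn.fun_sum
    intro s _
    exact ((differentiableOn_const _).mul ((differentiableOn_id.pow _))).mul (hg.pow _)
  have hFtdiff : DifferentiableOn ℂ Ft (Metric.ball (0 : ℂ) 1) :=
    hFdiff.congr hFtF
  -- continuity of G on closedBall \ {0}
  have hGcont : ContinuousOn G (Metric.closedBall (0 : ℂ) 1 \ {0}) := by
    apply ContinuousOn.mul (by fun_prop)
    have : ContinuousOn (fun z => ∑ s ∈ P.support, P.coeff s * (z ^ s 0 * φ z ^ s 1))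
        (Metric.closedBall (0 : ℂ) 1 \ {0}) := by
      apply continuousOn_finset_sum
      intro s _
      exact (continuousOn_const.mul ((continuousOn_id.pow _).mul (hcont.pow _)))
    exact this.congr fun z _ => heval z
  -- Ft continuous on closedBall
  have hFtcont : ContinuousOn Ft (Metric.closedBall (0 : ℂ) 1) := by
    intro z hz
    by_cases h0 : z = 0
    · subst h0
      have hball : Metric.ball (0 : ℂ) 1 ∈ nhds (0 : ℂ) :=
        Metric.ball_mem_nhds 0 one_pos
      rw [ContinuousWithinAt, ← nhdsWithin_inter_of_mem (mem_nhdsWithin_of_mem_nhds hball)]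
      have : ContinuousWithinAt Ft (Metric.ball (0 : ℂ) 1) 0 :=
        (hFtdiff.continuousOn) 0 (by simp)
      exact this.mono (Set.inter_subset_left)
    · have hmem : ({0}ᶜ : Set ℂ) ∈ nhds z := (isOpen_compl_singleton).mem_nhds h0
      rw [ContinuousWithinAt, ← nhdsWithin_inter_of_mem (mem_nhdsWithin_of_mem_nhds hmem)]
      have hG' : ContinuousWithinAt G (Metric.closedBall (0 : ℂ) 1 \ {0}) z :=
        hGcont z ⟨hz, h0⟩
      have heq : Set.EqOn Ft G (Metric.closedBall (0 : ℂ) 1 \ {0}) := by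
        intro w hw
        have hw0 : w ≠ 0 := fun h => hw.2 (by simp [h])
        rw [hFt]; simp only [if_neg hw0]
      rw [Set.inter_comm, ← Set.diff_eq]
      exact ContinuousWithinAt.congr hG' heq (heq ⟨hz, h0⟩)
  -- max modulus
  have hmax : ∀ z ∈ Metric.closedBall (0 : ℂ) 1, ‖Ft z‖ ≤ 1 := by
    intro z hz
    have hcl : z ∈ closure (Metric.ball (0 : ℂ) 1) := by
      rwa [closure_ball (0 : ℂ) one_ne_zero]
    refine Complex.norm_le_of_forall_mem_frontier_norm_le (Metric.isBounded_ball)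
      ⟨hFtdiff, ?_⟩ ?_ hcl
    · rw [closure_ball (0 : ℂ) one_ne_zero]; exact hFtcont
    · intro w hw
      rw [frontier_ball (0 : ℂ) one_ne_zero] at hw
      have hw0 : w ≠ 0 := by
        intro h; rw [h] at hw; simp at hw
      have habs : ‖w‖ = 1 := by simpa using hw
      rw [hFt]; simp only [if_neg hw0, hG]
      calc ‖w ^ (k * d) * MvPolynomial.eval ![w, φ w] P‖
          = ‖w‖ ^ (k * d) * ‖MvPolynomial.eval ![w, φ w] P‖ := by
            simp [map_mul, map_pow]
        _ ≤ 1 := by rw [habs]; simpa using hPbound w hw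
  -- conclude
  intro ζ₀ h0 h1
  have hζne : ζ₀ ≠ 0 := by
    intro h; rw [h] at h0; simp at h0
  have h2 : ζ₀ ∈ Metric.closedBall (0 : ℂ) 1 := by
    rw [Metric.mem_closedBall]; simp [Complex.dist_eq]
    exact le_of_lt (by simpa using h1)
  have := hmax ζ₀ h2
  rw [hFt] at this
  simp only [if_neg hζne, hG] at this
  have hnorm : ‖ζ₀‖ ^ (k * d) * ‖MvPolynomial.eval ![ζ₀, φ ζ₀] P‖ ≤ 1 := by
    calc ‖ζ₀‖ ^ (k * d) * ‖MvPolynomial.eval ![ζ₀, φ ζ₀] P‖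
        = ‖ζ₀ ^ (k * d) * MvPolynomial.eval ![ζ₀, φ ζ₀] P‖ := by
          simp [map_mul, map_pow]
      _ ≤ 1 := this
  have hpow : (0:ℝ) < ‖ζ₀‖ ^ (k * d) := pow_pos h0 _
  have key : ‖MvPolynomial.eval ![ζ₀, φ ζ₀] P‖ ≤ (1 / ‖ζ₀‖ ^ k) ^ d := by
    rw [div_pow, one_pow, ← pow_mul, le_div_iff₀ hpow, mul_comm]
    exact hnorm
  refine key.trans ?_
  have hpos : (0:ℝ) ≤ (1 / ‖ζ₀‖ ^ k) ^ d := by positivity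
  have hone : (1:ℝ) ≤ 1 / (1 - ‖ζ₀‖) := by
    rw [le_div_iff₀ (by linarith)]; linarith
  nlinarith
end

section
/- Let a : ℕ × ℕ → ℂ be such that the double series Φ(z, w) = Σ_{n,m≥0} a_{nm} zⁿ wᵐ is absolutely summable for every (z, w) ∈ ℂ². Define φ(ζ) = Σ_{n,m≥0} a_{nm} ζⁿ (ζ̄)ᵐ for ζ ∈ ℂ, and set γ = {(ζ, φ(ζ)) : |ζ| = 1} and Σ = {(ζ, φ(ζ)) : |ζ| ≤ 1} in ℂ². If Σ is contained in the projective hull of γ, then φ is holomorphic (complex differentiable) on the open unit disk {ζ : |ζ| < 1}; in particular the apparent singularity at ζ = 0 is removable. -/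
open Filter Topology Metric MvPolynomial

/-- Theorem 5: if φ(ζ) = Σ a_{nm} ζⁿ ζ̄ᵐ (the series converging absolutely everywhere) and
the graph Σ of φ over the closed disk lies in the projective hull of its graph γ over the
circle, then φ is holomorphic on the open unit disk. -/
theorem wermer_theorem_five
    (a : ℕ × ℕ → ℂ)
    (hsum : ∀ z w : ℂ, Summable fun p : ℕ × ℕ => ‖a p * z ^ p.1 * w ^ p.2‖)
    (φ : ℂ → ℂ)
    (hφ : φ = fun ζ => ∑' p : ℕ × ℕ, a p * ζ ^ p.1 * (starRingEnd ℂ ζ) ^ p.2)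
    (hhull : (fun ζ => (ζ, φ ζ)) '' Metric.closedBall (0 : ℂ) 1 ⊆
      projectiveHull ((fun ζ => (ζ, φ ζ)) '' Metric.sphere (0 : ℂ) 1)) :
    DifferentiableOn ℂ φ (Metric.ball (0 : ℂ) 1) := by
  classical
  -- basic summability facts
  have hsum' : ∀ z w : ℂ, Summable (fun p : ℕ × ℕ => a p * z ^ p.1 * w ^ p.2) :=
    fun z w => (hsum z w).of_norm
  have hsa : Summable (fun p : ℕ × ℕ => ‖a p‖) := by
    simpa using hsum 1 1
  have hw : ∀ R : ℝ, 0 ≤ R → Summable (fun p : ℕ × ℕ => ‖a p‖ * R ^ p.1 * R ^ p.2) := by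
    intro R hR
    refine (hsum (R : ℂ) (R : ℂ)).congr fun p => ?_
    simp [norm_mul, norm_pow, Complex.norm_real, Real.norm_eq_abs, abs_of_nonneg hR]
  -- the exhausting family of finite index sets
  set S : ℕ → Finset (ℕ × ℕ) :=
    fun N => (Finset.range (N + 1) ×ˢ Finset.range (2 * N + 1)).filter
      (fun p => p.2 ≤ N + p.1) with hSdef
  have hSmem : ∀ N (p : ℕ × ℕ), p ∈ S N ↔ p.1 ≤ N ∧ p.2 ≤ N + p.1 := by
    intro N p
    simp only [hSdef, Finset.mem_filter, Finset.mem_product, Finset.mem_range]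
    omega
  -- the polynomials
  set Q : ℕ → MvPolynomial (Fin 2) ℂ :=
    fun N => X 1 * X 0 ^ N - ∑ p ∈ S N, C (a p) * X 0 ^ (N + p.1 - p.2) with hQdef
  have hdeg : ∀ N, 1 ≤ N → (Q N).totalDegree ≤ 2 * N := by
    intro N hN
    refine le_trans (totalDegree_sub _ _) (max_le ?_ ?_)
    · refine le_trans (totalDegree_mul _ _) ?_
      have h1 : (X 1 : MvPolynomial (Fin 2) ℂ).totalDegree = 1 := totalDegree_X _
      have h2 : ((X 0 : MvPolynomial (Fin 2) ℂ) ^ N).totalDegree ≤ N := by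
        refine le_trans (totalDegree_pow _ _) ?_
        rw [totalDegree_X]; omega
      omega
    · refine le_trans (totalDegree_finset_sum _ _) (Finset.sup_le fun p hp => ?_)
      refine le_trans (totalDegree_mul _ _) ?_
      have h1 : (C (a p) : MvPolynomial (Fin 2) ℂ).totalDegree = 0 := totalDegree_C _
      have h2 : ((X 0 : MvPolynomial (Fin 2) ℂ) ^ (N + p.1 - p.2)).totalDegree
          ≤ N + p.1 - p.2 := by
        refine le_trans (totalDegree_pow _ _) ?_
        rw [totalDegree_X]; omega
      have hp' := (hSmem N p).1 hp
      omega
  have heval : ∀ N (z w : ℂ), eval ![z, w] (Q N)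
      = w * z ^ N - ∑ p ∈ S N, a p * z ^ (N + p.1 - p.2) := by
    intro N z w
    simp [hQdef, map_sum, Matrix.cons_val_one, Matrix.head_cons, Matrix.cons_val_zero]
  -- power identity
  have hpow : ∀ (z : ℂ), z ≠ 0 → ∀ N (p : ℕ × ℕ), p ∈ S N →
      z ^ (N + p.1 - p.2) = z ^ p.1 * (z⁻¹) ^ p.2 * z ^ N := by
    intro z hz N p hp
    have h2 : p.2 ≤ N + p.1 := ((hSmem N p).1 hp).2
    rw [pow_sub₀ z hz h2, inv_pow, pow_add]
    ring
  -- the tail sums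
  set E : ℕ → ℝ := fun N => ∑' (p : {p : ℕ × ℕ // p ∉ S N}), ‖a ↑p‖ with hEdef
  have hE0 : ∀ N, 0 ≤ E N := fun N => tsum_nonneg fun p => norm_nonneg _
  -- tail bound
  have hEbound : ∀ R : ℝ, 1 ≤ R → ∀ N : ℕ,
      E N * R ^ N ≤ ∑' p : ℕ × ℕ, ‖a p‖ * R ^ p.1 * R ^ p.2 := by
    intro R hR N
    have hR0 : (0 : ℝ) ≤ R := zero_le_one.trans hR
    have hsw := hw R hR0
    have hstep : E N * R ^ N
        = ∑' (p : {p : ℕ × ℕ // p ∉ S N}), ‖a ↑p‖ * R ^ N := by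
      rw [hEdef]; exact (tsum_mul_right).symm
    rw [hstep]
    have h1 : ∑' (p : {p : ℕ × ℕ // p ∉ S N}), ‖a ↑p‖ * R ^ N
        ≤ ∑' (p : {p : ℕ × ℕ // p ∉ S N}), ‖a ↑p‖ * R ^ (↑p : ℕ × ℕ).1 * R ^ (↑p : ℕ × ℕ).2 := by
      refine Summable.tsum_le_tsum ?_ ((hsa.subtype _).mul_right _) ((hsw.subtype _)) 
      rintro ⟨p, hp⟩
      have hnm : N ≤ p.1 + p.2 := by
        rw [hSmem] at hp; omega
      have : R ^ N ≤ R ^ (p.1 + p.2) := pow_le_pow_right₀ hR hnm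
      calc ‖a p‖ * R ^ N ≤ ‖a p‖ * R ^ (p.1 + p.2) :=
            mul_le_mul_of_nonneg_left this (norm_nonneg _)
        _ = ‖a p‖ * R ^ p.1 * R ^ p.2 := by rw [pow_add, mul_assoc]
    refine le_trans h1 ?_
    exact Summable.tsum_subtype_le (fun p : ℕ × ℕ => ‖a p‖ * R ^ p.1 * R ^ p.2) _
      (fun p => by positivity) hsw
  -- the boundary estimate
  have hγ : ∀ N (z : ℂ), ‖z‖ = 1 → ‖eval ![z, φ z] (Q N)‖ ≤ E N := by
    intro N z hz
    have hz0 : z ≠ 0 := by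
      intro h; rw [h] at hz; simp at hz
    rw [heval N z (φ z)]
    set g : ℕ × ℕ → ℂ := fun p => a p * z ^ p.1 * (starRingEnd ℂ z) ^ p.2 * z ^ N with hg
    have hgs : Summable g := (hsum' z _).mul_right _
    have hgn : ∀ p, ‖g p‖ = ‖a p‖ := by
      intro p
      have hcz : ‖starRingEnd ℂ z‖ = 1 := by
        rw [RCLike.norm_conj, hz]
      simp [hg, norm_mul, norm_pow, hz, hcz]
    have h1 : φ z * z ^ N = ∑' p, g p := by
      rw [hφ]; exact (tsum_mul_right).symm
    have h2 : ∀ p ∈ S N, a p * z ^ (N + p.1 - p.2) = g p := by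
      intro p hp
      rw [hg, ← Complex.inv_eq_conj hz, hpow z hz0 N p hp]
      ring
    have h3 : φ z * z ^ N - ∑ p ∈ S N, a p * z ^ (N + p.1 - p.2)
        = ∑' (p : {p : ℕ × ℕ // p ∉ S N}), g ↑p := by
      rw [h1, Finset.sum_congr rfl h2, ← Summable.sum_add_tsum_subtype_compl hgs (S N),
        add_sub_cancel_left]
    rw [h3]
    have h4 : Summable (fun p : {p : ℕ × ℕ // p ∉ S N} => ‖g ↑p‖) := by
      refine (hsa.subtype _).congr fun p => ?_
      exact (hgn ↑p).symm
    refine le_trans (norm_tsum_le_tsum_norm h4) ?_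
    rw [hEdef]
    exact le_of_eq (tsum_congr fun p => hgn ↑p)
  -- agreement of φ with the Laurent-type series on the punctured disk
  have key : ∀ ζ : ℂ, ζ ≠ 0 → ‖ζ‖ < 1 →
      φ ζ = ∑' p : ℕ × ℕ, a p * ζ ^ p.1 * (ζ⁻¹) ^ p.2 := by
    intro ζ hζ0 hζ1
    have hmemcb : (ζ, φ ζ) ∈ (fun ζ => (ζ, φ ζ)) '' Metric.closedBall (0 : ℂ) 1 :=
      ⟨ζ, by simpa using hζ1.le, rfl⟩
    obtain ⟨C, hC0, hC⟩ := hhull hmemcb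
    set r := ‖ζ‖ with hr
    have hr0 : 0 < r := norm_pos_iff.mpr hζ0
    set R : ℝ := max 1 ((C ^ 2 + 1) / r) with hRdef
    have hR1 : 1 ≤ R := le_max_left _ _
    have hR0 : (0 : ℝ) < R := lt_of_lt_of_le one_pos hR1
    set B : ℝ := ∑' p : ℕ × ℕ, ‖a p‖ * R ^ p.1 * R ^ p.2 with hB
    have hB0 : 0 ≤ B := tsum_nonneg fun p => by positivity
    set q : ℝ := C ^ 2 / (r * R) with hq
    have hq0 : 0 ≤ q := div_nonneg (by positivity) (by positivity)
    have hq1 : q < 1 := by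
      rw [hq, div_lt_one (by positivity)]
      have h1 : (C ^ 2 + 1) / r ≤ R := le_max_right _ _
      have h2 : C ^ 2 + 1 ≤ r * R := by
        rw [← div_le_iff₀' hr0]
        exact h1
      nlinarith
    set u : ℕ → ℂ := fun N => ∑ p ∈ S N, a p * ζ ^ p.1 * (ζ⁻¹) ^ p.2 with hu
    have hsumζ : Summable (fun p : ℕ × ℕ => a p * ζ ^ p.1 * (ζ⁻¹) ^ p.2) := hsum' ζ _
    have hmono : Monotone S := by
      intro M N h p hp
      rw [hSmem] at *
      omega
    have hexh : ∀ p : ℕ × ℕ, ∃ N, p ∈ S N := by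
      intro p
      exact ⟨p.1 + p.2, by rw [hSmem]; omega⟩
    have htendu : Tendsto u atTop (𝓝 (∑' p : ℕ × ℕ, a p * ζ ^ p.1 * (ζ⁻¹) ^ p.2)) :=
      hsumζ.hasSum.comp (Filter.tendsto_atTop_finset_of_monotone hmono hexh)
    -- the key bound
    have hbound : ∀ N, 1 ≤ N → ‖φ ζ - u N‖ ≤ B * q ^ N := by
      intro N hN
      have hP := hC (2 * N) (Q N) (hdeg N hN)
      -- sup over the curve
      have himg : ∀ x ∈ ((fun y : ℂ × ℂ => ‖eval ![y.1, y.2] (Q N)‖) ''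
          ((fun ζ => (ζ, φ ζ)) '' Metric.sphere (0 : ℂ) 1)), x ≤ E N := by
        rintro x ⟨y, ⟨w, hw1, rfl⟩, rfl⟩
        have hw2 : ‖w‖ = 1 := by simpa using hw1
        have := hγ N w hw2
        simpa using this
      have hne : ((fun y : ℂ × ℂ => ‖eval ![y.1, y.2] (Q N)‖) ''
          ((fun ζ => (ζ, φ ζ)) '' Metric.sphere (0 : ℂ) 1)).Nonempty := by
        exact ⟨_, Set.mem_image_of_mem _ (Set.mem_image_of_mem _
          (show (1 : ℂ) ∈ Metric.sphere (0 : ℂ) 1 by simp))⟩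
      have hsSup : sSup ((fun y : ℂ × ℂ => ‖eval ![y.1, y.2] (Q N)‖) ''
          ((fun ζ => (ζ, φ ζ)) '' Metric.sphere (0 : ℂ) 1)) ≤ E N := csSup_le hne himg
      -- rewrite the left-hand side
      have hlhs : ‖eval ![((ζ, φ ζ) : ℂ × ℂ).1, ((ζ, φ ζ) : ℂ × ℂ).2] (Q N)‖
          = r ^ N * ‖φ ζ - u N‖ := by
        show ‖eval ![ζ, φ ζ] (Q N)‖ = _
        rw [heval]
        have h5 : ∑ p ∈ S N, a p * ζ ^ (N + p.1 - p.2) = u N * ζ ^ N := by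
          rw [hu, Finset.sum_mul]
          refine Finset.sum_congr rfl fun p hp => ?_
          rw [hpow ζ hζ0 N p hp]; ring
        have h6 : φ ζ * ζ ^ N - u N * ζ ^ N = (φ ζ - u N) * ζ ^ N := by ring
        rw [h5, h6, norm_mul, norm_pow]
        rw [hr]; ring
      rw [hlhs] at hP
      have hP2 : r ^ N * ‖φ ζ - u N‖ ≤ C ^ (2 * N) * E N := by
        refine le_trans hP ?_
        exact mul_le_mul_of_nonneg_left hsSup (by positivity)
      -- combine with the tail bound
      have hEb := hEbound R hR1 N
      rw [← hB] at hEb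
      have hrN : (0 : ℝ) < r ^ N := by positivity
      have hRN : (0 : ℝ) < R ^ N := by positivity
      have hqN : B * q ^ N * (r ^ N * R ^ N) = B * (C ^ 2) ^ N := by
        rw [hq, div_pow, mul_pow]
        field_simp
      have hC2N : C ^ (2 * N) = (C ^ 2) ^ N := by rw [← pow_mul]
      rw [hC2N] at hP2
      have hδ0 : (0 : ℝ) ≤ (C ^ 2) ^ N := by positivity
      have h1 : ‖φ ζ - u N‖ * (r ^ N * R ^ N) ≤ (C ^ 2) ^ N * B := by
        calc ‖φ ζ - u N‖ * (r ^ N * R ^ N) = (r ^ N * ‖φ ζ - u N‖) * R ^ N := by ring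
          _ ≤ ((C ^ 2) ^ N * E N) * R ^ N := mul_le_mul_of_nonneg_right hP2 hRN.le
          _ = (C ^ 2) ^ N * (E N * R ^ N) := by ring
          _ ≤ (C ^ 2) ^ N * B := mul_le_mul_of_nonneg_left hEb hδ0
      have h2 : ‖φ ζ - u N‖ ≤ (C ^ 2) ^ N * B / (r ^ N * R ^ N) :=
        (le_div_iff₀ (by positivity)).mpr h1
      refine h2.trans (le_of_eq ?_)
      rw [div_eq_iff (by positivity : (0 : ℝ) < r ^ N * R ^ N).ne']
      rw [hqN]
      ring
    -- pass to the limit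
    have htend0 : Tendsto (fun N => B * q ^ N) atTop (𝓝 0) := by
      have := (tendsto_pow_atTop_nhds_zero_of_lt_one hq0 hq1).const_mul B
      simpa using this
    have hnorm0 : Tendsto (fun N => ‖φ ζ - u N‖) atTop (𝓝 0) := by
      refine squeeze_zero' (Filter.Eventually.of_forall fun N => norm_nonneg _) ?_ htend0
      filter_upwards [Filter.eventually_ge_atTop 1] with N hN
      exact hbound N hN
    have htendφ : Tendsto u atTop (𝓝 (φ ζ)) := by
      have h7 : Tendsto (fun N => φ ζ - u N) atTop (𝓝 0) :=
        tendsto_zero_iff_norm_tendsto_zero.mpr hnorm0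
      have h8 : Tendsto (fun N => φ ζ - (φ ζ - u N)) atTop (𝓝 (φ ζ - 0)) :=
        tendsto_const_nhds.sub h7
      simpa using h8
    exact tendsto_nhds_unique htendφ htendu
  -- Ψ is the Laurent-type series; it is differentiable away from 0
  set Ψ : ℂ → ℂ := fun ζ => ∑' p : ℕ × ℕ, a p * ζ ^ p.1 * (ζ⁻¹) ^ p.2 with hΨ
  have hΨdiff : ∀ ζ0 : ℂ, ζ0 ≠ 0 → DifferentiableAt ℂ Ψ ζ0 := by
    intro ζ0 hζ0
    set r := ‖ζ0‖ with hr
    have hr0 : 0 < r := norm_pos_iff.mpr hζ0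
    set s : Set ℂ := {ζ | r / 2 < ‖ζ‖ ∧ ‖ζ‖ < r + 1} with hs
    have hsopen : IsOpen s := by
      refine IsOpen.inter ?_ ?_
      · exact isOpen_lt continuous_const continuous_norm
      · exact isOpen_lt continuous_norm continuous_const
    have hsub : s ⊆ {x : ℂ | x ≠ 0} := by
      rintro x ⟨hx1, -⟩
      intro h
      rw [h] at hx1
      simp at hx1
      linarith
    set K : ℝ := max (r + 1) (2 / r) with hK
    have hK0 : 0 ≤ K := le_trans (by positivity) (le_max_left _ _)
    have hKsum : Summable (fun p : ℕ × ℕ => ‖a p‖ * K ^ p.1 * K ^ p.2) := hw K hK0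
    have hbnd : ∀ (p : ℕ × ℕ), ∀ ζ ∈ s, ‖a p * ζ ^ p.1 * (ζ⁻¹) ^ p.2‖
        ≤ ‖a p‖ * K ^ p.1 * K ^ p.2 := by
      rintro p ζ ⟨h1, h2⟩
      have hζn0 : (0 : ℝ) < ‖ζ‖ := lt_trans (by positivity) h1
      have hb1 : ‖ζ‖ ≤ K := le_trans h2.le (le_max_left _ _)
      have hb2 : ‖ζ⁻¹‖ ≤ K := by
        rw [norm_inv]
        refine le_trans ?_ (le_max_right _ _)
        calc ‖ζ‖⁻¹ ≤ (r / 2)⁻¹ := by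
              exact inv_anti₀ (by positivity) h1.le
          _ = 2 / r := by rw [inv_div]
      calc ‖a p * ζ ^ p.1 * (ζ⁻¹) ^ p.2‖
          = ‖a p‖ * ‖ζ‖ ^ p.1 * ‖ζ⁻¹‖ ^ p.2 := by simp [norm_mul, norm_pow]
        _ ≤ ‖a p‖ * K ^ p.1 * K ^ p.2 := by
            gcongr <;> first | exact norm_nonneg _ | exact hb1 | exact hb2
    have htuo : TendstoUniformlyOn
        (fun (t : Finset (ℕ × ℕ)) ζ => ∑ p ∈ t, a p * ζ ^ p.1 * (ζ⁻¹) ^ p.2)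
        (fun ζ => ∑' p : ℕ × ℕ, a p * ζ ^ p.1 * (ζ⁻¹) ^ p.2) atTop s :=
      tendstoUniformlyOn_tsum hKsum hbnd
    have hdiffs : ∀ t : Finset (ℕ × ℕ), DifferentiableOn ℂ
        (fun ζ => ∑ p ∈ t, a p * ζ ^ p.1 * (ζ⁻¹) ^ p.2) s := by
      intro t
      refine DifferentiableOn.fun_sum fun p _ => ?_
      refine DifferentiableOn.mul ?_ ?_
      · exact ((differentiable_const _).mul (differentiable_pow _)).differentiableOn
      · exact (differentiableOn_inv.mono hsub).pow _
    have hΨd : DifferentiableOn ℂ Ψ s :=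
      htuo.tendstoLocallyUniformlyOn.differentiableOn
        (Filter.Eventually.of_forall hdiffs) hsopen
    refine hΨd.differentiableAt (hsopen.mem_nhds ?_)
    exact ⟨half_lt_self hr0, lt_add_one r⟩
  -- continuity of φ
  have hcont : ContinuousOn φ (Metric.ball (0 : ℂ) 2) := by
    have hbnd2 : ∀ (p : ℕ × ℕ), ∀ ζ ∈ Metric.ball (0 : ℂ) 2,
        ‖a p * ζ ^ p.1 * (starRingEnd ℂ ζ) ^ p.2‖ ≤ ‖a p‖ * 2 ^ p.1 * 2 ^ p.2 := by
      intro p ζ hζ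
      have hζ2 : ‖ζ‖ ≤ 2 := (mem_ball_zero_iff.mp hζ).le
      have hcζ : ‖starRingEnd ℂ ζ‖ ≤ 2 := by rw [RCLike.norm_conj]; exact hζ2
      calc ‖a p * ζ ^ p.1 * (starRingEnd ℂ ζ) ^ p.2‖
          = ‖a p‖ * ‖ζ‖ ^ p.1 * ‖starRingEnd ℂ ζ‖ ^ p.2 := by simp [norm_mul, norm_pow]
        _ ≤ ‖a p‖ * 2 ^ p.1 * 2 ^ p.2 := by
            gcongr <;> first | exact norm_nonneg _ | exact hζ2 | exact hcζ
    have htuo2 : TendstoUniformlyOn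
        (fun (t : Finset (ℕ × ℕ)) ζ => ∑ p ∈ t, a p * ζ ^ p.1 * (starRingEnd ℂ ζ) ^ p.2)
        (fun ζ => ∑' p : ℕ × ℕ, a p * ζ ^ p.1 * (starRingEnd ℂ ζ) ^ p.2) atTop
        (Metric.ball (0 : ℂ) 2) :=
      tendstoUniformlyOn_tsum (hw 2 (by norm_num)) hbnd2
    rw [hφ]
    refine htuo2.continuousOn (Filter.Eventually.of_forall fun t => ?_).frequently
    refine Continuous.continuousOn ?_
    refine continuous_finset_sum _ fun p _ => ?_
    exact (continuous_const.mul (continuous_pow _)).mul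
      ((Complex.continuous_conj).pow _)
  have hc0 : ContinuousAt φ 0 :=
    hcont.continuousAt (isOpen_ball.mem_nhds (by simp))
  -- φ is differentiable on the punctured ball
  have hφd : DifferentiableOn ℂ φ (Metric.ball (0 : ℂ) 1 \ {0}) := by
    intro z hz
    obtain ⟨hz1, hz2⟩ := hz
    have hz0 : z ≠ 0 := by simpa using hz2
    have hzn : ‖z‖ < 1 := mem_ball_zero_iff.mp hz1
    refine ((hΨdiff z hz0).differentiableWithinAt).congr ?_ ?_
    · rintro y ⟨hy1, hy2⟩
      have hy0 : y ≠ 0 := by simpa using hy2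
      exact key y hy0 (mem_ball_zero_iff.mp hy1)
    · exact key z hz0 hzn
  -- boundedness
  have hbdd : BddAbove (norm ∘ φ '' (Metric.ball (0 : ℂ) 1 \ {0})) := by
    refine ⟨∑' p : ℕ × ℕ, ‖a p‖, ?_⟩
    rintro x ⟨z, ⟨hz1, -⟩, rfl⟩
    have hzn : ‖z‖ ≤ 1 := (mem_ball_zero_iff.mp hz1).le
    show ‖φ z‖ ≤ _
    rw [hφ]
    refine le_trans (norm_tsum_le_tsum_norm (hsum z _)) (Summable.tsum_le_tsum ?_ (hsum z _) hsa)
    intro p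
    have hcz : ‖starRingEnd ℂ z‖ ≤ 1 := by rw [RCLike.norm_conj]; exact hzn
    calc ‖a p * z ^ p.1 * (starRingEnd ℂ z) ^ p.2‖
        = ‖a p‖ * ‖z‖ ^ p.1 * ‖starRingEnd ℂ z‖ ^ p.2 := by simp [norm_mul, norm_pow]
      _ ≤ ‖a p‖ * 1 ^ p.1 * 1 ^ p.2 := by
          gcongr <;> first | exact norm_nonneg _ | exact hzn | exact hcz
      _ = ‖a p‖ := by ring
  -- removable singularity
  have hmem : Metric.ball (0 : ℂ) 1 ∈ 𝓝 (0 : ℂ) := isOpen_ball.mem_nhds (by simp)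
  have hupd := Complex.differentiableOn_update_limUnder_of_bddAbove hmem hφd hbdd
  have hlim : Tendsto φ (𝓝[≠] (0 : ℂ)) (𝓝 (φ 0)) :=
    hc0.tendsto.mono_left nhdsWithin_le_nhds
  have hlimeq : limUnder (𝓝[≠] (0 : ℂ)) φ = φ 0 := hlim.limUnder_eq
  refine hupd.congr fun z hz => ?_
  by_cases hz0 : z = 0
  · subst hz0
    rw [Function.update_self, hlimeq]
  · rw [Function.update_of_ne hz0]
end

section
/- Let a : ℕ × ℕ → ℂ and let R > 4 and C ≥ 0 be constants with |a_{nm}| ≤ C / R^{n+m} for all n, m ∈ ℕ, so that the double series Σ_{n,m≥0} a_{nm} zⁿ wᵐ is absolutely summable for all |z|, |w| ≤ 2. Define φ(ζ) = Σ_{n,m≥0} a_{nm} ζⁿ (ζ̄)ᵐ, and for d ∈ ℕ define the polynomial P_d(ζ, w) = ζ^d · w − Σ_{n+m ≤ d} a_{nm} ζ^{n + d − m} (a polynomial of total degree at most 2d). Then for every ζ with |ζ| = 1, one has P_d(ζ, φ(ζ)) = ζ^d · Σ_{n+m > d} a_{nm} ζⁿ (ζ̄)ᵐ, and consequently sup_{|ζ|=1}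 |P_d(ζ, φ(ζ))| ≤ C · (2/R)^d · (4 + 2d). -/
/-- Equation (18): with |a_{nm}| ≤ C / R^{n+m} (R > 4), φ(ζ) = Σ a_{nm} ζⁿ ζ̄ᵐ, and the
polynomial P_d(ζ,w) = ζ^d w − Σ_{n+m≤d} a_{nm} ζ^{n+d−m}, one has on the unit circle
P_d(ζ, φ(ζ)) = ζ^d Σ_{n+m>d} a_{nm} ζⁿ ζ̄ᵐ, hence |P_d(ζ, φ(ζ))| ≤ C (2/R)^d (4 + 2d). -/
theorem Pd_on_circle
    (a : ℕ × ℕ → ℂ) (R C : ℝ) (hR : 4 < R) (hC : 0 ≤ C)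
    (ha : ∀ n m : ℕ, ‖a (n, m)‖ ≤ C / R ^ (n + m))
    (φ : ℂ → ℂ)
    (hφ : φ = fun ζ => ∑' p : ℕ × ℕ, a p * ζ ^ p.1 * (starRingEnd ℂ ζ) ^ p.2)
    (d : ℕ) (Pd : ℂ → ℂ → ℂ)
    (hPd : Pd = fun ζ w => ζ ^ d * w -
      ∑ p ∈ (Finset.range (d + 1) ×ˢ Finset.range (d + 1)).filter
          (fun p => p.1 + p.2 ≤ d),
        a p * ζ ^ (p.1 + d - p.2)) :
    (∀ ζ ∈ Metric.sphere (0 : ℂ) 1,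
      Pd ζ (φ ζ) = ζ ^ d * ∑' p : {p : ℕ × ℕ // d < p.1 + p.2},
        a p.1 * ζ ^ p.1.1 * (starRingEnd ℂ ζ) ^ p.1.2) ∧
    (∀ ζ ∈ Metric.sphere (0 : ℂ) 1,
      ‖Pd ζ (φ ζ)‖ ≤ C * (2 / R) ^ d * (4 + 2 * d)) := by
  have hR0 : (0:ℝ) < R := by linarith
  -- the bounding summable series
  have hgeo : Summable (fun n : ℕ => (1/4 : ℝ) ^ n) :=
    summable_geometric_of_lt_one (by norm_num) (by norm_num)
  have hsum4 : Summable (fun p : ℕ × ℕ => C * ((1/4 : ℝ) ^ p.1 * (1/4 : ℝ) ^ p.2)) :=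
    (hgeo.mul_of_nonneg hgeo (fun n => by positivity) (fun n => by positivity)).mul_left C
  have habs : ∀ p : ℕ × ℕ, ‖a p‖ ≤ C * ((1/4 : ℝ) ^ p.1 * (1/4 : ℝ) ^ p.2) := by
    rintro ⟨n, m⟩
    have h1 := ha n m
    have h2 : C / R ^ (n + m) ≤ C / 4 ^ (n + m) := by
      apply div_le_div_of_nonneg_left hC (by positivity)
      exact pow_le_pow_left₀ (by norm_num) hR.le _
    calc ‖a (n, m)‖ ≤ C / R ^ (n + m) := h1
      _ ≤ C / 4 ^ (n + m) := h2
      _ = C * ((1/4 : ℝ) ^ n * (1/4 : ℝ) ^ m) := by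
          rw [← pow_add, one_div_pow]; ring
  -- set of low-degree pairs
  set S : Finset (ℕ × ℕ) := (Finset.range (d + 1) ×ˢ Finset.range (d + 1)).filter
      (fun p => p.1 + p.2 ≤ d) with hS
  have hScompl : ((S : Set (ℕ × ℕ))ᶜ) = {p : ℕ × ℕ | d < p.1 + p.2} := by
    ext ⟨n, m⟩
    simp only [Set.mem_compl_iff, Finset.coe_filter, Set.mem_setOf_eq, Finset.mem_coe,
      Finset.mem_product, Finset.mem_range, hS, Finset.mem_filter]
    omega
  -- part 1
  have h1 : ∀ ζ ∈ Metric.sphere (0 : ℂ) 1,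
      Pd ζ (φ ζ) = ζ ^ d * ∑' p : {p : ℕ × ℕ // d < p.1 + p.2},
        a p.1 * ζ ^ p.1.1 * (starRingEnd ℂ ζ) ^ p.1.2 := by
    intro ζ hζ
    have hζ1 : ‖ζ‖ = 1 := by
      simpa [Complex.dist_eq] using hζ
    have hζ0 : ζ ≠ 0 := by
      intro h; rw [h] at hζ1; simp at hζ1
    have hconj : (starRingEnd ℂ) ζ = ζ⁻¹ := by
      have : ζ * (starRingEnd ℂ) ζ = 1 := by
        rw [Complex.mul_conj]
        norm_cast
        rw [Complex.normSq_eq_norm_sq, hζ1]; norm_num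
      field_simp at this ⊢
      linear_combination this
    -- summability of the main series
    have hnorm : ∀ p : ℕ × ℕ, ‖a p * ζ ^ p.1 * (starRingEnd ℂ ζ) ^ p.2‖ = ‖a p‖ := by
      intro p
      rw [norm_mul, norm_mul, norm_pow, norm_pow,
        Complex.norm_conj, hζ1]
      simp
    have hsf : Summable (fun p : ℕ × ℕ => a p * ζ ^ p.1 * (starRingEnd ℂ ζ) ^ p.2) := by
      apply Summable.of_norm_bounded hsum4
      intro p; rw [hnorm p]; exact habs p
    have hsg : Summable (fun p : ℕ × ℕ => ζ ^ d * (a p * ζ ^ p.1 * (starRingEnd ℂ ζ) ^ p.2)) :=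
      hsf.mul_left _
    -- split the sum
    have hsplit := Summable.sum_add_tsum_compl (s := S)
      (f := fun p : ℕ × ℕ => ζ ^ d * (a p * ζ ^ p.1 * (starRingEnd ℂ ζ) ^ p.2)) hsg
    rw [hScompl] at hsplit
    -- identify the finset sum with the polynomial part
    have hfin : ∀ p ∈ S, ζ ^ d * (a p * ζ ^ p.1 * (starRingEnd ℂ ζ) ^ p.2)
        = a p * ζ ^ (p.1 + d - p.2) := by
      rintro ⟨n, m⟩ hp
      simp only [hS, Finset.mem_filter, Finset.mem_product, Finset.mem_range] at hp
      have hm : m ≤ n + d := by omega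
      rw [hconj, inv_pow, pow_sub₀ ζ hζ0 hm, pow_add]
      ring
    have hPdval : Pd ζ (φ ζ) = ζ ^ d * (∑' p : ℕ × ℕ, a p * ζ ^ p.1 * (starRingEnd ℂ ζ) ^ p.2)
        - ∑ p ∈ S, ζ ^ d * (a p * ζ ^ p.1 * (starRingEnd ℂ ζ) ^ p.2) := by
      rw [hPd, hφ]
      simp only
      rw [Finset.sum_congr rfl hfin]
    have hpull : ∑' (x : ↑{p : ℕ × ℕ | d < p.1 + p.2}),
        ζ ^ d * (a x * ζ ^ (x : ℕ × ℕ).1 * (starRingEnd ℂ ζ) ^ (x : ℕ × ℕ).2)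
        = ζ ^ d * ∑' p : {p : ℕ × ℕ // d < p.1 + p.2},
          a p.1 * ζ ^ p.1.1 * (starRingEnd ℂ ζ) ^ p.1.2 := tsum_mul_left
    have hpull2 : ζ ^ d * ∑' p : ℕ × ℕ, a p * ζ ^ p.1 * (starRingEnd ℂ ζ) ^ p.2
        = ∑' p : ℕ × ℕ, ζ ^ d * (a p * ζ ^ p.1 * (starRingEnd ℂ ζ) ^ p.2) :=
      tsum_mul_left.symm
    rw [hPdval, hpull2, ← hsplit, hpull]
    ring
  refine ⟨h1, ?_⟩
  -- part 2
  intro ζ hζ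
  have hζ1 : ‖ζ‖ = 1 := by
    simpa [Complex.dist_eq] using hζ
  rw [h1 ζ hζ]
  have hnorm : ∀ p : ℕ × ℕ, ‖a p * ζ ^ p.1 * (starRingEnd ℂ ζ) ^ p.2‖ = ‖a p‖ := by
    intro p
    rw [norm_mul, norm_mul, norm_pow, norm_pow,
      Complex.norm_conj, hζ1]
    simp
  -- bound for high-degree terms
  have hbd : ∀ p : {p : ℕ × ℕ // d < p.1 + p.2},
      ‖a p.1‖ ≤ C * (2/R) ^ d * ((1/2 : ℝ) ^ p.1.1 * (1/2 : ℝ) ^ p.1.2) := by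
    rintro ⟨⟨n, m⟩, hp⟩
    simp only at hp ⊢
    obtain ⟨k, hk⟩ : ∃ k, n + m = d + (k + 1) := ⟨n + m - d - 1, by omega⟩
    have h2R : (2:ℝ) ^ (k+1) ≤ R ^ (k+1) := pow_le_pow_left₀ (by norm_num) (by linarith) _
    calc ‖a (n, m)‖ ≤ C / R ^ (n + m) := ha n m
      _ ≤ C / (R ^ d * 2 ^ (k+1)) := by
          apply div_le_div_of_nonneg_left hC (by positivity)
          rw [hk]
          calc R ^ d * 2 ^ (k+1) ≤ R ^ d * R ^ (k+1) :=
                mul_le_mul_of_nonneg_left h2R (by positivity)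
            _ = R ^ (d + (k+1)) := (pow_add R d (k+1)).symm
      _ = C * (2/R) ^ d * ((1/2 : ℝ) ^ n * (1/2 : ℝ) ^ m) := by
          rw [← pow_add, hk]
          rw [div_pow, one_div, inv_pow]
          rw [pow_add]
          field_simp
          ring
  -- summability on the subtype
  have hgeo2 : Summable (fun n : ℕ => (1/2 : ℝ) ^ n) :=
    summable_geometric_of_lt_one (by norm_num) (by norm_num)
  have hfull : Summable (fun p : ℕ × ℕ => C * (2/R) ^ d * ((1/2 : ℝ) ^ p.1 * (1/2 : ℝ) ^ p.2)) :=
    (hgeo2.mul_of_nonneg hgeo2 (fun n => by positivity) (fun n => by positivity)).mul_left _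
  have hsub : Summable (fun p : {p : ℕ × ℕ // d < p.1 + p.2} =>
      C * (2/R) ^ d * ((1/2 : ℝ) ^ p.1.1 * (1/2 : ℝ) ^ p.1.2)) :=
    hfull.subtype {p : ℕ × ℕ | d < p.1 + p.2}
  have hsubf : Summable (fun p : {p : ℕ × ℕ // d < p.1 + p.2} =>
      ‖a p.1 * ζ ^ p.1.1 * (starRingEnd ℂ ζ) ^ p.1.2‖) := by
    apply Summable.of_nonneg_of_le (fun p => norm_nonneg _) _ hsub
    intro p; rw [hnorm]; exact hbd p
  -- the full geometric sum is 4
  have htot : ∑' p : ℕ × ℕ, C * (2/R) ^ d * ((1/2 : ℝ) ^ p.1 * (1/2 : ℝ) ^ p.2)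
      = C * (2/R) ^ d * 4 := by
    rw [tsum_mul_left]
    have : ∑' p : ℕ × ℕ, (1/2 : ℝ) ^ p.1 * (1/2 : ℝ) ^ p.2
        = (∑' n : ℕ, (1/2 : ℝ) ^ n) * (∑' n : ℕ, (1/2 : ℝ) ^ n) := by
      rw [tsum_mul_tsum_of_summable_norm]
      · simpa using hgeo2
      · simpa using hgeo2
    rw [this, tsum_geometric_of_lt_one (by norm_num) (by norm_num)]
    norm_num
  -- final bound
  rw [norm_mul, norm_pow, hζ1, one_pow, one_mul]
  calc ‖∑' p : {p : ℕ × ℕ // d < p.1 + p.2},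
        a p.1 * ζ ^ p.1.1 * (starRingEnd ℂ ζ) ^ p.1.2‖
      ≤ ∑' p : {p : ℕ × ℕ // d < p.1 + p.2},
        ‖a p.1 * ζ ^ p.1.1 * (starRingEnd ℂ ζ) ^ p.1.2‖ := by
        exact norm_tsum_le_tsum_norm hsubf
    _ ≤ ∑' p : {p : ℕ × ℕ // d < p.1 + p.2},
        C * (2/R) ^ d * ((1/2 : ℝ) ^ p.1.1 * (1/2 : ℝ) ^ p.1.2) := by
        apply Summable.tsum_le_tsum _ hsubf hsub
        intro p; rw [hnorm]; exact hbd p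
    _ ≤ ∑' p : ℕ × ℕ, C * (2/R) ^ d * ((1/2 : ℝ) ^ p.1 * (1/2 : ℝ) ^ p.2) := by
        exact Summable.tsum_le_tsum_of_inj (fun p => p.1) Subtype.val_injective
          (fun c _ => by positivity) (fun p => le_refl _) hsub hfull
    _ = C * (2/R) ^ d * 4 := htot
    _ ≤ C * (2/R) ^ d * (4 + 2 * d) := by
        have : (0:ℝ) ≤ C * (2/R) ^ d := by positivity
        nlinarith [this, Nat.cast_nonneg (α := ℝ) d]
end

section
/- Let a : ℕ × ℕ → ℂ be such that the double series Σ_{n,m≥0} a_{nm} zⁿ wᵐ is absolutely summable for every (z, w) ∈ ℂ², defining an entire function Φ(z, w). If Φ(α, ᾱ) = Φ(α, 1/α) for every α ∈ ℂ with α ≠ 0, then the function φ : ζ ↦ Φ(ζ, ζ̄) is holomorphic (complex differentiable) on ℂ \ {0}. -/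
open Metric Set

/-- If Φ(z,w) = Σ a_{nm} zⁿ wᵐ is entire and Φ(α, ᾱ) = Φ(α, 1/α) for all α ≠ 0,
then ζ ↦ Φ(ζ, ζ̄) is holomorphic on ℂ \ {0}. -/
theorem graph_holomorphic_off_zero
    (a : ℕ × ℕ → ℂ)
    (hsum : ∀ z w : ℂ, Summable fun p : ℕ × ℕ => ‖a p * z ^ p.1 * w ^ p.2‖)
    (Φ : ℂ → ℂ → ℂ)
    (hΦ : Φ = fun z w => ∑' p : ℕ × ℕ, a p * z ^ p.1 * w ^ p.2)
    (heq : ∀ α : ℂ, α ≠ 0 → Φ α (starRingEnd ℂ α) = Φ α α⁻¹) :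
    ∀ ζ : ℂ, ζ ≠ 0 → DifferentiableAt ℂ (fun z => Φ z (starRingEnd ℂ z)) ζ := by
  intro ζ hζ
  set r : ℝ := ‖ζ‖ with hr
  have hr0 : 0 < r := norm_pos_iff.2 hζ
  set A : ℝ := max (3 * r / 2) 1 with hA
  set B : ℝ := max (2 / r) 1 with hB
  have hA1 : (1:ℝ) ≤ A := le_max_right _ _
  have hB1 : (1:ℝ) ≤ B := le_max_right _ _
  have hA0 : (0:ℝ) < A := lt_of_lt_of_le one_pos hA1
  have hB0 : (0:ℝ) < B := lt_of_lt_of_le one_pos hB1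
  set t : Set ℂ := ball ζ (r / 2) with ht
  -- basic facts about points of t
  have hmem : ∀ z ∈ t, z ≠ 0 ∧ ‖z‖ ≤ A ∧ ‖z⁻¹‖ ≤ B := by
    intro z hz
    rw [ht, mem_ball, dist_eq_norm] at hz
    have h1 : r - r / 2 ≤ ‖z‖ := by
      have := norm_sub_norm_le ζ z
      rw [show ζ - z = -(z - ζ) by ring, norm_neg] at this
      linarith
    have hz2 : r / 2 ≤ ‖z‖ := by linarith
    have hzne : z ≠ 0 := by
      intro h; rw [h, norm_zero] at hz2; linarith
    refine ⟨hzne, ?_, ?_⟩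
    · have h2 : ‖z‖ ≤ r / 2 + r := by
        have := norm_sub_norm_le z ζ
        linarith
      calc ‖z‖ ≤ 3 * r / 2 := by linarith
        _ ≤ A := le_max_left _ _
    · rw [norm_inv]
      rw [inv_le_comm₀ (norm_pos_iff.2 hzne) (by positivity : (0:ℝ) < B)]
      calc B⁻¹ ≤ (2 / r)⁻¹ := by
            apply inv_anti₀ (by positivity) (le_max_left _ _)
        _ = r / 2 := by field_simp
        _ ≤ ‖z‖ := hz2
  have hζt : ζ ∈ t := mem_ball_self (by positivity)
  -- the series and its derivatives
  set g : ℕ × ℕ → ℂ → ℂ := fun p z => a p * z ^ p.1 * z⁻¹ ^ p.2 with hg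
  set g' : ℕ × ℕ → ℂ → ℂ := fun p z =>
    a p * ((p.1 : ℂ) * z ^ (p.1 - 1) * z⁻¹ ^ p.2
      + z ^ p.1 * ((p.2 : ℂ) * z⁻¹ ^ (p.2 - 1) * (-(z ^ 2)⁻¹))) with hg'
  have hderiv : ∀ p : ℕ × ℕ, ∀ z ∈ t, HasDerivAt (g p) (g' p z) z := by
    intro p z hz
    obtain ⟨hzne, -, -⟩ := hmem z hz
    have h1 : HasDerivAt (fun y : ℂ => y ^ p.1) ((p.1 : ℂ) * z ^ (p.1 - 1)) z :=
      hasDerivAt_pow p.1 z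
    have h2 : HasDerivAt (fun y : ℂ => y⁻¹ ^ p.2)
        ((p.2 : ℂ) * z⁻¹ ^ (p.2 - 1) * (-(z ^ 2)⁻¹)) z :=
      (hasDerivAt_inv hzne).pow p.2
    have := (h1.mul h2).const_mul (a p)
    simpa [hg, hg', mul_assoc, mul_add] using this
  -- the bound
  set u : ℕ × ℕ → ℝ := fun p =>
    ‖a p * ((2 * A : ℝ) : ℂ) ^ p.1 * ((2 * B : ℝ) : ℂ) ^ p.2‖ * B ^ 2 with hu
  have hu_eq : ∀ p : ℕ × ℕ, u p = ‖a p‖ * (2 * A) ^ p.1 * (2 * B) ^ p.2 * B ^ 2 := by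
    intro p
    simp [hu, norm_mul, norm_pow, Complex.norm_real, abs_of_pos, hA0, hB0,
      abs_of_pos (by positivity : (0:ℝ) < 2 * A), abs_of_pos (by positivity : (0:ℝ) < 2 * B)]
  have husum : Summable u := (hsum _ _).mul_right (B ^ 2)
  have hbound : ∀ p : ℕ × ℕ, ∀ z ∈ t, ‖g' p z‖ ≤ u p := by
    intro p z hz
    obtain ⟨hzne, hzA, hzB⟩ := hmem z hz
    obtain ⟨n, m⟩ := p
    have hzn : (0:ℝ) ≤ ‖z‖ := norm_nonneg _
    have hzin : (0:ℝ) ≤ ‖z⁻¹‖ := norm_nonneg _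
    have hpowA : ‖z‖ ^ (n - 1) ≤ A ^ n :=
      (pow_le_pow_left₀ hzn hzA _).trans (pow_le_pow_right₀ hA1 (Nat.sub_le n 1))
    have hpowA' : ‖z‖ ^ n ≤ A ^ n := pow_le_pow_left₀ hzn hzA _
    have hpowB : ‖z⁻¹‖ ^ (m - 1) ≤ B ^ m :=
      (pow_le_pow_left₀ hzin hzB _).trans (pow_le_pow_right₀ hB1 (Nat.sub_le m 1))
    have hpowB' : ‖z⁻¹‖ ^ m ≤ B ^ m := pow_le_pow_left₀ hzin hzB _
    have hsq : ‖(-(z ^ 2)⁻¹ : ℂ)‖ ≤ B ^ 2 := by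
      rw [norm_neg, norm_inv, norm_pow, ← inv_pow, ← norm_inv] at *
      exact pow_le_pow_left₀ hzin hzB 2
    have key : ‖g' (n, m) z‖ ≤ ‖a (n, m)‖ * ((n + m : ℝ) * (A ^ n * B ^ m * B ^ 2)) := by
      have e1 : ‖(n : ℂ) * z ^ (n - 1) * z⁻¹ ^ m‖ ≤ (n : ℝ) * (A ^ n * B ^ m) := by
        rw [norm_mul, norm_mul, norm_pow, norm_pow, Complex.norm_natCast, mul_assoc]
        gcongr
      have e2 : ‖z ^ n * ((m : ℂ) * z⁻¹ ^ (m - 1) * (-(z ^ 2)⁻¹))‖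
          ≤ A ^ n * ((m : ℝ) * B ^ m * B ^ 2) := by
        simp only [norm_mul, norm_pow, Complex.norm_natCast]
        gcongr
      calc ‖g' (n, m) z‖
          ≤ ‖a (n, m)‖ * (‖(n : ℂ) * z ^ (n - 1) * z⁻¹ ^ m‖
            + ‖z ^ n * ((m : ℂ) * z⁻¹ ^ (m - 1) * (-(z ^ 2)⁻¹))‖) := by
            rw [hg', norm_mul]
            gcongr
            exact norm_add_le _ _
        _ ≤ ‖a (n, m)‖ * ((n : ℝ) * (A ^ n * B ^ m)
            + A ^ n * ((m : ℝ) * B ^ m * B ^ 2)) := by gcongr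
        _ ≤ ‖a (n, m)‖ * ((n + m : ℝ) * (A ^ n * B ^ m * B ^ 2)) := by
            have hAn : (0:ℝ) < A ^ n := by positivity
            have hBm : (0:ℝ) < B ^ m := by positivity
            have h2 : B ^ 2 ≤ B * B := by rw [sq]
            apply mul_le_mul_of_nonneg_left _ (norm_nonneg _)
            have hB2 : B ^ 2 = B * B := sq B
            have hB2' : (1:ℝ) ≤ B ^ 2 := by nlinarith
            have hfact : 0 ≤ (n:ℝ) * (A ^ n * B ^ m) * (B ^ 2 - 1) :=
              mul_nonneg (mul_nonneg (Nat.cast_nonneg n) (by positivity)) (by linarith)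
            nlinarith [hfact]
    have hnm : ((n + m : ℕ) : ℝ) ≤ 2 ^ n * 2 ^ m := by
      have := Nat.lt_two_pow_self (n := n + m)
      calc ((n + m : ℕ) : ℝ) ≤ (2 ^ (n + m) : ℕ) := by exact_mod_cast this.le
        _ = 2 ^ n * 2 ^ m := by push_cast [pow_add]; ring
    calc ‖g' (n, m) z‖ ≤ ‖a (n, m)‖ * ((n + m : ℝ) * (A ^ n * B ^ m * B ^ 2)) := key
      _ ≤ ‖a (n, m)‖ * ((2 ^ n * 2 ^ m) * (A ^ n * B ^ m * B ^ 2)) := by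
          apply mul_le_mul_of_nonneg_left _ (norm_nonneg _)
          apply mul_le_mul_of_nonneg_right _ (by positivity)
          exact_mod_cast hnm
      _ = ‖a (n, m)‖ * (2 * A) ^ n * (2 * B) ^ m * B ^ 2 := by ring
      _ = u (n, m) := (hu_eq (n, m)).symm
  -- summability at the center
  have hg0 : Summable fun p => g p ζ := by
    apply Summable.of_norm
    exact hsum ζ ζ⁻¹
  have hHD : HasDerivAt (fun z => ∑' p, g p z) (∑' p, g' p ζ) ζ :=
    hasDerivAt_tsum_of_isPreconnected husum isOpen_ball (convex_ball ζ (r / 2)).isPreconnected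
      hderiv hbound hζt hg0 hζt
  have hdiff : DifferentiableAt ℂ (fun z => ∑' p, g p z) ζ := hHD.differentiableAt
  apply hdiff.congr_of_eventuallyEq
  have hopen : t ∈ nhds ζ := isOpen_ball.mem_nhds hζt
  filter_upwards [hopen] with z hz
  obtain ⟨hzne, -, -⟩ := hmem z hz
  rw [heq z hzne, hΦ]
end

section
/- Let a : ℕ × ℕ → ℂ be such that the double series Σ_{n,m≥0} a_{nm} zⁿ wᵐ is absolutely summable for every (z, w) ∈ ℂ², and define φ(ζ) = Σ_{n,m≥0} a_{nm} ζⁿ (ζ̄)ᵐ for ζ ∈ ℂ. If φ is holomorphic (complex differentiable) on some nonempty open subset U of ℂ, then φ is an entire holomorphic function, i.e. complex differentiable at every point of ℂ. -/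
open Complex Metric Filter
open scoped Topology

private lemma normBoundAux (M : ℝ) (hM : 1 ≤ M) (x y g d cc : ℂ) (n m : ℕ)
    (hx : ‖x‖ ≤ M) (hy : ‖y‖ ≤ M) (hg : ‖g‖ ≤ M) (hd : ‖d‖ ≤ M) :
    ‖cc * (((n : ℂ) * x ^ (n - 1) * g) * y ^ m + x ^ n * ((m : ℂ) * y ^ (m - 1) * d))‖
      ≤ M * (‖cc‖ * (2 * M) ^ (n + m)) := by
  have hM0 : (0:ℝ) ≤ M := le_trans zero_le_one hM
  have ex : ‖x‖ ^ (n-1) ≤ M ^ (n-1) := pow_le_pow_left₀ (norm_nonneg x) hx _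
  have ex' : ‖x‖ ^ n ≤ M ^ n := pow_le_pow_left₀ (norm_nonneg x) hx _
  have ey : ‖y‖ ^ (m-1) ≤ M ^ (m-1) := pow_le_pow_left₀ (norm_nonneg y) hy _
  have ey' : ‖y‖ ^ m ≤ M ^ m := pow_le_pow_left₀ (norm_nonneg y) hy _
  have h1 : ‖((n : ℂ) * x ^ (n - 1) * g) * y ^ m‖ ≤ (n : ℝ) * M ^ (n + m + 1) := by
    have e : ‖((n : ℂ) * x ^ (n - 1) * g) * y ^ m‖
        = (n : ℝ) * ‖x‖ ^ (n - 1) * ‖g‖ * ‖y‖ ^ m := by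
      simp [norm_mul, norm_pow]
    rw [e]
    have : (n : ℝ) * ‖x‖ ^ (n - 1) * ‖g‖ * ‖y‖ ^ m ≤ (n : ℝ) * M ^ (n-1) * M * M ^ m := by
      have b1 : (n : ℝ) * ‖x‖ ^ (n - 1) ≤ (n:ℝ) * M ^ (n-1) :=
        mul_le_mul_of_nonneg_left ex (Nat.cast_nonneg n)
      have b2 : (n : ℝ) * ‖x‖ ^ (n - 1) * ‖g‖ ≤ (n:ℝ) * M ^ (n-1) * M :=
        mul_le_mul b1 hg (norm_nonneg g) (by positivity)
      exact mul_le_mul b2 ey' (by positivity) (by positivity)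
    refine this.trans ?_
    have : M ^ (n-1) * M * M ^ m = M ^ ((n-1) + 1 + m) := by rw [pow_add, pow_add, pow_one]
    have h' : M ^ ((n-1)+1+m) ≤ M ^ (n+m+1) := pow_le_pow_right₀ hM (by omega)
    calc (n : ℝ) * M ^ (n-1) * M * M ^ m = (n:ℝ) * (M ^ ((n-1)+1+m)) := by
          rw [pow_add, pow_add, pow_one]; ring
      _ ≤ (n : ℝ) * M ^ (n+m+1) := mul_le_mul_of_nonneg_left h' (Nat.cast_nonneg n)
  have h2 : ‖x ^ n * ((m : ℂ) * y ^ (m - 1) * d)‖ ≤ (m : ℝ) * M ^ (n + m + 1) := by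
    have e : ‖x ^ n * ((m : ℂ) * y ^ (m - 1) * d)‖
        = ‖x‖ ^ n * ((m : ℝ) * ‖y‖ ^ (m - 1) * ‖d‖) := by
      simp [norm_mul, norm_pow]
    rw [e]
    have : ‖x‖ ^ n * ((m : ℝ) * ‖y‖ ^ (m - 1) * ‖d‖) ≤ M ^ n * ((m:ℝ) * M ^ (m-1) * M) := by
      have b1 : (m : ℝ) * ‖y‖ ^ (m - 1) ≤ (m:ℝ) * M ^ (m-1) :=
        mul_le_mul_of_nonneg_left ey (Nat.cast_nonneg m)
      have b2 : (m : ℝ) * ‖y‖ ^ (m - 1) * ‖d‖ ≤ (m:ℝ) * M ^ (m-1) * M :=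
        mul_le_mul b1 hd (norm_nonneg d) (by positivity)
      exact mul_le_mul ex' b2 (by positivity) (by positivity)
    refine this.trans ?_
    have h' : M ^ (n+(m-1)+1) ≤ M ^ (n+m+1) := pow_le_pow_right₀ hM (by omega)
    calc M ^ n * ((m:ℝ) * M ^ (m-1) * M) = (m:ℝ) * (M ^ (n+(m-1)+1)) := by
          rw [pow_add, pow_add, pow_one]; ring
      _ ≤ (m : ℝ) * M ^ (n+m+1) := mul_le_mul_of_nonneg_left h' (Nat.cast_nonneg m)
  have hnm : ((n : ℝ) + m) ≤ 2 ^ (n + m) := by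
    have := Nat.lt_two_pow_self (n := n + m)
    exact_mod_cast this.le
  calc ‖cc * (((n : ℂ) * x ^ (n - 1) * g) * y ^ m + x ^ n * ((m : ℂ) * y ^ (m - 1) * d))‖
      = ‖cc‖ * ‖((n : ℂ) * x ^ (n - 1) * g) * y ^ m + x ^ n * ((m : ℂ) * y ^ (m - 1) * d)‖ :=
        norm_mul _ _
    _ ≤ ‖cc‖ * ((n : ℝ) * M ^ (n + m + 1) + (m : ℝ) * M ^ (n + m + 1)) := by
        refine mul_le_mul_of_nonneg_left ?_ (norm_nonneg cc)
        exact (norm_add_le _ _).trans (add_le_add h1 h2)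
    _ = ‖cc‖ * (((n : ℝ) + m) * (M ^ (n + m) * M)) := by rw [pow_succ]; ring
    _ ≤ ‖cc‖ * ((2 : ℝ) ^ (n + m) * (M ^ (n + m) * M)) := by
        refine mul_le_mul_of_nonneg_left ?_ (norm_nonneg cc)
        refine mul_le_mul_of_nonneg_right hnm (by positivity)
    _ = M * (‖cc‖ * (2 * M) ^ (n + m)) := by rw [mul_pow]; ring

private lemma keyHasDerivAt (c : ℕ × ℕ → ℂ)
    (hc : ∀ r : ℝ, 0 ≤ r → Summable fun p : ℕ × ℕ => ‖c p‖ * r ^ (p.1 + p.2))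
    (α β γ δ : ℂ) (s : ℂ) :
    HasDerivAt (fun z => ∑' p : ℕ × ℕ, c p * (α + γ * z) ^ p.1 * (β + δ * z) ^ p.2)
      (∑' p : ℕ × ℕ, c p * (((p.1 : ℂ) * (α + γ * s) ^ (p.1 - 1) * γ) * (β + δ * s) ^ p.2
        + (α + γ * s) ^ p.1 * ((p.2 : ℂ) * (β + δ * s) ^ (p.2 - 1) * δ))) s := by
  set R : ℝ := ‖s‖ + 1 with hRdef
  set M : ℝ := ‖α‖ + ‖β‖ + ‖γ‖ + ‖δ‖ + (‖γ‖ + ‖δ‖) * R + 1 with hMdef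
  have hR0 : (0:ℝ) < R := by positivity
  have hM1 : (1:ℝ) ≤ M := by
    have h1 := norm_nonneg α; have h2 := norm_nonneg β; have h3 := norm_nonneg γ
    have h4 := norm_nonneg δ
    have h5 : (0:ℝ) ≤ (‖γ‖ + ‖δ‖) * R := mul_nonneg (by linarith) hR0.le
    simp only [hMdef]; linarith
  have hM0 : (0:ℝ) ≤ M := le_trans zero_le_one hM1
  have hα : ∀ z ∈ ball (0:ℂ) R, ‖α + γ * z‖ ≤ M := by
    intro z hz
    have hz' : ‖z‖ ≤ R := (mem_ball_zero_iff.1 hz).le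
    have : ‖α + γ * z‖ ≤ ‖α‖ + ‖γ‖ * ‖z‖ := by
      simpa [norm_mul] using norm_add_le α (γ * z)
    have h1 := norm_nonneg β; have h2 := norm_nonneg γ; have h3 := norm_nonneg δ
    have h4 : ‖γ‖ * ‖z‖ ≤ ‖γ‖ * R := mul_le_mul_of_nonneg_left hz' h2
    have h5 : (0:ℝ) ≤ ‖δ‖ * R := mul_nonneg h3 hR0.le
    simp only [hMdef]; nlinarith
  have hβ : ∀ z ∈ ball (0:ℂ) R, ‖β + δ * z‖ ≤ M := by
    intro z hz
    have hz' : ‖z‖ ≤ R := (mem_ball_zero_iff.1 hz).le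
    have : ‖β + δ * z‖ ≤ ‖β‖ + ‖δ‖ * ‖z‖ := by
      simpa [norm_mul] using norm_add_le β (δ * z)
    have h1 := norm_nonneg α; have h2 := norm_nonneg γ; have h3 := norm_nonneg δ
    have h4 : ‖δ‖ * ‖z‖ ≤ ‖δ‖ * R := mul_le_mul_of_nonneg_left hz' h3
    have h5 : (0:ℝ) ≤ ‖γ‖ * R := mul_nonneg h2 hR0.le
    simp only [hMdef]; nlinarith
  have hγM : ‖γ‖ ≤ M := by
    have h1 := norm_nonneg α; have h2 := norm_nonneg β; have h3 := norm_nonneg δ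
    have h5 : (0:ℝ) ≤ (‖γ‖ + ‖δ‖) * R := mul_nonneg (by positivity) hR0.le
    simp only [hMdef]; linarith
  have hδM : ‖δ‖ ≤ M := by
    have h1 := norm_nonneg α; have h2 := norm_nonneg β; have h3 := norm_nonneg γ
    have h5 : (0:ℝ) ≤ (‖γ‖ + ‖δ‖) * R := mul_nonneg (by positivity) hR0.le
    simp only [hMdef]; linarith
  have hu : Summable fun p : ℕ × ℕ => M * (‖c p‖ * (2 * M) ^ (p.1 + p.2)) :=
    (hc (2 * M) (by positivity)).mul_left M
  refine hasDerivAt_tsum_of_isPreconnected (𝕜 := ℂ) (F := ℂ) (t := ball (0:ℂ) R) (y₀ := (0:ℂ))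
    (g := fun (p : ℕ × ℕ) (z : ℂ) => c p * (α + γ * z) ^ p.1 * (β + δ * z) ^ p.2)
    (g' := fun (p : ℕ × ℕ) (z : ℂ) => c p * (((p.1 : ℂ) * (α + γ * z) ^ (p.1 - 1) * γ) * (β + δ * z) ^ p.2
      + (α + γ * z) ^ p.1 * ((p.2 : ℂ) * (β + δ * z) ^ (p.2 - 1) * δ)))
    hu isOpen_ball (convex_ball _ _).isPreconnected
    (fun p z hz => ?_) (fun p z hz => ?_) (mem_ball_self hR0) ?_ ?_
  · -- HasDerivAt per term
    have hA : HasDerivAt (fun z : ℂ => α + γ * z) γ z := by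
      simpa using ((hasDerivAt_id z).const_mul γ).const_add α
    have hB : HasDerivAt (fun z : ℂ => β + δ * z) δ z := by
      simpa using ((hasDerivAt_id z).const_mul δ).const_add β
    have := ((hA.fun_pow p.1).const_mul (c p)).fun_mul (hB.fun_pow p.2)
    refine this.congr_deriv ?_
    ring
  · -- bound
    exact normBoundAux M hM1 _ _ _ _ (c p) p.1 p.2 (hα z hz) (hβ z hz) hγM hδM
  · -- summable at 0
    refine Summable.of_norm (Summable.of_nonneg_of_le (fun p => norm_nonneg _)
      (fun p => ?_) (hc M hM0))
    have h1 : ‖α + γ * 0‖ ≤ M := hα 0 (mem_ball_self hR0)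
    have h2 : ‖β + δ * 0‖ ≤ M := hβ 0 (mem_ball_self hR0)
    calc ‖c p * (α + γ * 0) ^ p.1 * (β + δ * 0) ^ p.2‖
        = ‖c p‖ * ‖α + γ * 0‖ ^ p.1 * ‖β + δ * 0‖ ^ p.2 := by
          simp [norm_mul, norm_pow]
      _ ≤ ‖c p‖ * M ^ p.1 * M ^ p.2 := by
          refine mul_le_mul (mul_le_mul_of_nonneg_left
            (pow_le_pow_left₀ (norm_nonneg _) h1 _) (norm_nonneg _))
            (pow_le_pow_left₀ (norm_nonneg _) h2 _) (by positivity) (by positivity)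
      _ = ‖c p‖ * M ^ (p.1 + p.2) := by rw [pow_add]; ring
  · simp only [mem_ball_zero_iff, hRdef]
    exact lt_add_one _

private lemma summableDerivAux (c : ℕ × ℕ → ℂ)
    (hc : ∀ r : ℝ, 0 ≤ r → Summable fun p : ℕ × ℕ => ‖c p‖ * r ^ (p.1 + p.2))
    (x y g d : ℂ) :
    Summable fun p : ℕ × ℕ => c p * (((p.1 : ℂ) * x ^ (p.1 - 1) * g) * y ^ p.2
      + x ^ p.1 * ((p.2 : ℂ) * y ^ (p.2 - 1) * d)) := by
  set M : ℝ := ‖x‖ + ‖y‖ + ‖g‖ + ‖d‖ + 1 with hMdef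
  have hM1 : (1:ℝ) ≤ M := by
    have h1 := norm_nonneg x; have h2 := norm_nonneg y; have h3 := norm_nonneg g
    have h4 := norm_nonneg d
    simp only [hMdef]; linarith
  have h1 := norm_nonneg x; have h2 := norm_nonneg y; have h3 := norm_nonneg g
  have h4 := norm_nonneg d
  refine Summable.of_norm (Summable.of_nonneg_of_le (fun p => norm_nonneg _)
    (fun p => normBoundAux M hM1 x y g d (c p) p.1 p.2 (by simp only [hMdef]; linarith)
      (by simp only [hMdef]; linarith) (by simp only [hMdef]; linarith)
      (by simp only [hMdef]; linarith))
    ((hc (2 * M) (by positivity)).mul_left M))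

private lemma zeroExtend (f : ℂ → ℂ) (hf : Differentiable ℂ f) (ε : ℝ) (hε : 0 < ε)
    (h0 : ∀ x : ℝ, |x| < ε → f ↑x = 0) : ∀ z, f z = 0 := by
  have hA : AnalyticOnNhd ℂ f Set.univ := fun z _ => hf.analyticAt z
  have hseq : Tendsto (fun k : ℕ => ((ε / (k + 2) : ℝ) : ℂ)) atTop (𝓝[≠] (0:ℂ)) := by
    rw [tendsto_nhdsWithin_iff]
    constructor
    · have h1 : Tendsto (fun k : ℕ => (ε / ((k:ℝ) + 2) : ℝ)) atTop (𝓝 0) := by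
        have := (tendsto_const_div_atTop_nhds_zero_nat ε).comp (tendsto_add_atTop_nat 2)
        refine this.congr fun k => ?_
        simp [Function.comp]
      have h2 : Tendsto (fun x : ℝ => (x:ℂ)) (𝓝 0) (𝓝 0) := by
        simpa using Complex.continuous_ofReal.tendsto (0:ℝ)
      exact h2.comp h1
    · refine Eventually.of_forall fun k => ?_
      simp only [Set.mem_compl_iff, Set.mem_singleton_iff]
      intro h
      have h' : (ε / ((k:ℝ)+2) : ℝ) = 0 := by exact_mod_cast h
      have hpos : 0 < (ε / ((k:ℝ)+2) : ℝ) := by positivity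
      linarith
  have hfreq : ∃ᶠ z in 𝓝[≠] (0:ℂ), f z = 0 := by
    refine hseq.frequently (Frequently.of_forall fun k => ?_)
    apply h0
    have hpos : 0 < (ε / ((k:ℝ)+2)) := by positivity
    rw [abs_of_pos hpos]
    refine div_lt_self hε ?_
    have : (0:ℝ) ≤ (k:ℝ) := Nat.cast_nonneg k
    linarith
  have := hA.eqOn_zero_of_preconnected_of_frequently_eq_zero isPreconnected_univ
    (Set.mem_univ (0:ℂ)) hfreq
  exact fun z => this (Set.mem_univ z)

private lemma valAtZero (d : ℕ → ℂ)
    (hd : ∀ r : ℝ, 0 ≤ r → Summable fun n => ‖d n‖ * r ^ n)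
    (h : ∀ z : ℂ, z ≠ 0 → ∑' n, d n * z ^ n = 0) : d 0 = 0 := by
  set G : ℂ → ℂ := fun z => ∑' n, d n * z ^ n with hGdef
  have hcont : ContinuousOn G (ball (0:ℂ) 1) := by
    refine continuousOn_tsum (u := fun n => ‖d n‖ * 1 ^ n)
      (fun n => Continuous.continuousOn (by continuity))
      (hd 1 zero_le_one) (fun n z hz => ?_)
    have hz1 : ‖z‖ ≤ 1 := (mem_ball_zero_iff.1 hz).le
    calc ‖d n * z ^ n‖ = ‖d n‖ * ‖z‖ ^ n := by simp [norm_mul, norm_pow]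
      _ ≤ ‖d n‖ * 1 ^ n := by
          exact mul_le_mul_of_nonneg_left (pow_le_pow_left₀ (norm_nonneg z) hz1 n) (norm_nonneg _)
  have hat : ContinuousAt G 0 := hcont.continuousAt (isOpen_ball.mem_nhds (by simp))
  have hzseq : Tendsto (fun k : ℕ => ((1 / ((k:ℝ) + 2) : ℝ) : ℂ)) atTop (𝓝 (0:ℂ)) := by
    have h1 : Tendsto (fun k : ℕ => (1 / ((k:ℝ) + 2) : ℝ)) atTop (𝓝 0) := by
      have := (tendsto_const_div_atTop_nhds_zero_nat (1:ℝ)).comp (tendsto_add_atTop_nat 2)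
      refine this.congr fun k => ?_
      simp [Function.comp]
    have h2 : Tendsto (fun x : ℝ => (x:ℂ)) (𝓝 0) (𝓝 0) := by
      simpa using Complex.continuous_ofReal.tendsto (0:ℝ)
    exact h2.comp h1
  have h1 : Tendsto (fun k : ℕ => G (((1 / ((k:ℝ)+2) : ℝ)) : ℂ)) atTop (𝓝 (G 0)) :=
    hat.tendsto.comp hzseq
  have h2 : (fun k : ℕ => G (((1 / ((k:ℝ)+2) : ℝ)) : ℂ)) = fun _ => (0:ℂ) := by
    funext k
    refine h _ ?_
    simp only [ne_eq, Complex.ofReal_eq_zero]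
    positivity
  rw [h2] at h1
  have hG0 : (0:ℂ) = G 0 := tendsto_nhds_unique tendsto_const_nhds h1
  have hGd : G 0 = d 0 := by
    simp only [hGdef]
    rw [tsum_eq_single 0 (fun n hn => by simp [zero_pow hn])]
    simp
  rw [← hGd, ← hG0]

private lemma coeffZero1D (N : ℕ) : ∀ (d : ℕ → ℂ),
    (∀ r : ℝ, 0 ≤ r → Summable fun n => ‖d n‖ * r ^ n) →
    (∀ z : ℂ, z ≠ 0 → ∑' n, d n * z ^ n = 0) → d N = 0 := by
  induction N with
  | zero => exact fun d hd h => valAtZero d hd h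
  | succ N ih =>
    intro d hd h
    have hd0 : d 0 = 0 := valAtZero d hd h
    exact ih (fun k => d (k+1)) (fun r hr => by
      refine Summable.of_nonneg_of_le (fun k => by positivity) (fun k => ?_)
        ((hd (r+1) (by linarith)).comp_injective (add_left_injective 1))
      simp only [Function.comp]
      have hle : r ^ k ≤ (r+1) ^ (k+1) :=
        le_trans (pow_le_pow_left₀ hr (by linarith) k)
          (pow_le_pow_right₀ (by linarith) (Nat.le_succ k))
      exact mul_le_mul_of_nonneg_left hle (norm_nonneg _))
      (fun z hz => by
      have hsz : Summable fun n => d n * z ^ n := by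
        refine Summable.of_norm (((hd ‖z‖ (norm_nonneg z))).congr fun n => ?_)
        simp [norm_mul, norm_pow]
      have h1 := hsz.tsum_eq_zero_add
      rw [h z hz, hd0] at h1
      have h2 : ∑' k, d (k+1) * z ^ (k+1) = 0 := by simpa using h1.symm
      have h3 : (∑' k, d (k+1) * z ^ k) * z = 0 := by
        rw [← h2, ← tsum_mul_right]
        exact tsum_congr fun k => by rw [pow_succ]; ring
      exact (mul_eq_zero.mp h3).resolve_right hz)

private lemma hcSlice (c : ℕ × ℕ → ℂ)
    (hc : ∀ r : ℝ, 0 ≤ r → Summable fun p : ℕ × ℕ => ‖c p‖ * r ^ (p.1 + p.2))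
    (n : ℕ) : ∀ r : ℝ, 0 ≤ r → Summable fun m => ‖c (n, m)‖ * r ^ m := by
  intro r hr
  have h1 : (1:ℝ) ≤ max r 1 := le_max_right r 1
  refine Summable.of_nonneg_of_le (fun m => by positivity) (fun m => ?_)
    ((hc (max r 1) (by positivity)).prod_factor n)
  have hle : r ^ m ≤ (max r 1) ^ (n + m) :=
    le_trans (pow_le_pow_left₀ hr (le_max_left r 1) m)
      (pow_le_pow_right₀ h1 (by omega))
  exact mul_le_mul_of_nonneg_left hle (norm_nonneg _)

private lemma coeffZero2D (c : ℕ × ℕ → ℂ)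
    (hc : ∀ r : ℝ, 0 ≤ r → Summable fun p : ℕ × ℕ => ‖c p‖ * r ^ (p.1 + p.2))
    (U : Set ℂ) (hU : IsOpen U) (hne : U.Nonempty)
    (hvan : ∀ ζ ∈ U, ∑' p : ℕ × ℕ, c p * ζ ^ p.1 * (starRingEnd ℂ ζ) ^ p.2 = 0) :
    ∀ p, c p = 0 := by
  obtain ⟨ζ₀, hζ₀⟩ := hne
  obtain ⟨ε, hε, hball⟩ := Metric.isOpen_iff.1 hU ζ₀ hζ₀
  set K : ℂ → ℂ → ℂ := fun s t => ∑' p : ℕ × ℕ, c p * (ζ₀ + s + Complex.I * t) ^ p.1 *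
      ((starRingEnd ℂ) ζ₀ + s - Complex.I * t) ^ p.2 with hKdef
  have hdiffs : ∀ t : ℂ, Differentiable ℂ (fun s => K s t) := by
    intro t
    have he : (fun s => K s t) = fun s => ∑' p : ℕ × ℕ,
        c p * ((ζ₀ + Complex.I * t) + 1 * s) ^ p.1
          * (((starRingEnd ℂ) ζ₀ - Complex.I * t) + 1 * s) ^ p.2 := by
      funext s
      exact tsum_congr fun p => by ring_nf
    rw [he]
    exact fun s => (keyHasDerivAt c hc _ _ 1 1 s).differentiableAt
  have hdifft : ∀ s : ℂ, Differentiable ℂ (fun t => K s t) := by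
    intro s
    have he : (fun t => K s t) = fun t => ∑' p : ℕ × ℕ,
        c p * ((ζ₀ + s) + Complex.I * t) ^ p.1
          * (((starRingEnd ℂ) ζ₀ + s) + (-Complex.I) * t) ^ p.2 := by
      funext t
      exact tsum_congr fun p => by ring_nf
    rw [he]
    exact fun t => (keyHasDerivAt c hc _ _ Complex.I (-Complex.I) t).differentiableAt
  have step0 : ∀ x y : ℝ, |x| < ε/2 → |y| < ε/2 → K ↑x ↑y = 0 := by
    intro x y hx hy
    have hmem : ζ₀ + ↑x + Complex.I * ↑y ∈ U := by
      apply hball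
      simp only [Metric.mem_ball, dist_eq_norm]
      have e : ζ₀ + ↑x + Complex.I * ↑y - ζ₀ = ↑x + Complex.I * ↑y := by ring
      rw [e]
      calc ‖(↑x + Complex.I * ↑y : ℂ)‖ ≤ ‖(↑x : ℂ)‖ + ‖Complex.I * ↑y‖ := norm_add_le _ _
        _ = |x| + |y| := by simp [norm_mul, Complex.norm_real]
        _ < ε := by linarith
    have hconj : (starRingEnd ℂ) (ζ₀ + ↑x + Complex.I * ↑y)
        = (starRingEnd ℂ) ζ₀ + ↑x - Complex.I * ↑y := by
      simp only [map_add, map_mul, Complex.conj_ofReal, Complex.conj_I]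
      ring
    have h := hvan _ hmem
    rw [hconj] at h
    exact h
  have step1 : ∀ y : ℝ, |y| < ε/2 → ∀ s : ℂ, K s ↑y = 0 := fun y hy =>
    zeroExtend (fun s => K s ↑y) (hdiffs ↑y) (ε/2) (by linarith) (fun x hx => step0 x y hx hy)
  have step2 : ∀ s t : ℂ, K s t = 0 := fun s t =>
    zeroExtend (fun t => K s t) (hdifft s) (ε/2) (by linarith) (fun y hy => step1 y hy s) t
  have step3 : ∀ z w : ℂ, ∑' p : ℕ × ℕ, c p * z ^ p.1 * w ^ p.2 = 0 := by
    intro z w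
    set A := z - ζ₀ with hA
    set B := w - (starRingEnd ℂ) ζ₀ with hB
    set s := (A + B) / 2 with hs
    set t := (A - B) * (-Complex.I) / 2 with ht
    have h1 : ζ₀ + s + Complex.I * t = z := by
      simp only [hs, ht, hA, hB]
      have hI := Complex.I_sq
      linear_combination (-((z - ζ₀) - (w - (starRingEnd ℂ) ζ₀))/2) * hI
    have h2 : (starRingEnd ℂ) ζ₀ + s - Complex.I * t = w := by
      simp only [hs, ht, hA, hB]
      have hI := Complex.I_sq
      linear_combination (((z - ζ₀) - (w - (starRingEnd ℂ) ζ₀))/2) * hI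
    have h := step2 s t
    simp only [hKdef] at h
    rw [h1, h2] at h
    exact h
  -- coefficient extraction
  have hsummable : ∀ z w : ℂ, Summable fun p : ℕ × ℕ => c p * z ^ p.1 * w ^ p.2 := by
    intro z w
    set ρ := max (max ‖z‖ ‖w‖) 1 with hρ
    have hz : ‖z‖ ≤ ρ := le_trans (le_max_left _ _) (le_max_left _ _)
    have hw : ‖w‖ ≤ ρ := le_trans (le_max_right _ _) (le_max_left _ _)
    refine Summable.of_norm (Summable.of_nonneg_of_le (fun p => norm_nonneg _)
      (fun p => ?_) (hc ρ (by positivity)))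
    calc ‖c p * z ^ p.1 * w ^ p.2‖ = ‖c p‖ * ‖z‖ ^ p.1 * ‖w‖ ^ p.2 := by
          simp [norm_mul, norm_pow]
      _ ≤ ‖c p‖ * ρ ^ p.1 * ρ ^ p.2 :=
          mul_le_mul (mul_le_mul_of_nonneg_left
            (pow_le_pow_left₀ (norm_nonneg z) hz _) (norm_nonneg _))
            (pow_le_pow_left₀ (norm_nonneg w) hw _) (by positivity) (by positivity)
      _ = ‖c p‖ * ρ ^ (p.1 + p.2) := by rw [pow_add]; ring
  have hinnerZero : ∀ n : ℕ, ∀ w : ℂ, ∑' m, c (n, m) * w ^ m = 0 := by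
    intro n w
    refine coeffZero1D n (fun k => ∑' m, c (k, m) * w ^ m) ?_ ?_
    · -- summability of outer coefficients
      intro r hr
      set ρ := max (max r ‖w‖) 1 with hρ
      have hrρ : r ≤ ρ := le_trans (le_max_left _ _) (le_max_left _ _)
      have hwρ : ‖w‖ ≤ ρ := le_trans (le_max_right _ _) (le_max_left _ _)
      have hρ0 : (0:ℝ) ≤ ρ := by positivity
      have hE := hc ρ hρ0
      have houter : Summable fun k => ∑' m, ‖c (k, m)‖ * ρ ^ (k + m) := by
        have := (summable_prod_of_nonneg (f := fun p : ℕ × ℕ => ‖c p‖ * ρ ^ (p.1 + p.2))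
          (fun p => by positivity)).1 hE
        exact this.2
      refine Summable.of_nonneg_of_le (fun k => by positivity) (fun k => ?_) houter
      have hnormw : Summable fun m => ‖c (k, m) * w ^ m‖ := by
        refine Summable.of_nonneg_of_le (fun m => norm_nonneg _) (fun m => ?_)
          (hE.prod_factor k)
        calc ‖c (k, m) * w ^ m‖ = ‖c (k, m)‖ * ‖w‖ ^ m := by simp [norm_mul, norm_pow]
          _ ≤ ‖c (k, m)‖ * ρ ^ (k + m) := by
              refine mul_le_mul_of_nonneg_left ?_ (norm_nonneg _)
              exact le_trans (pow_le_pow_left₀ (norm_nonneg w) hwρ m)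
                (pow_le_pow_right₀ (le_max_right _ _) (by omega))
      calc ‖∑' m, c (k, m) * w ^ m‖ * r ^ k ≤ (∑' m, ‖c (k, m) * w ^ m‖) * r ^ k :=
            mul_le_mul_of_nonneg_right (norm_tsum_le_tsum_norm hnormw) (by positivity)
        _ = ∑' m, ‖c (k, m) * w ^ m‖ * r ^ k := by rw [tsum_mul_right]
        _ ≤ ∑' m, ‖c (k, m)‖ * ρ ^ (k + m) := by
            refine Summable.tsum_le_tsum (fun m => ?_) (hnormw.mul_right _) (hE.prod_factor k)
            calc ‖c (k, m) * w ^ m‖ * r ^ k = ‖c (k, m)‖ * ‖w‖ ^ m * r ^ k := by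
                  simp [norm_mul, norm_pow]
              _ ≤ ‖c (k, m)‖ * ρ ^ m * ρ ^ k := by
                  refine mul_le_mul (mul_le_mul_of_nonneg_left
                    (pow_le_pow_left₀ (norm_nonneg w) hwρ m) (norm_nonneg _))
                    (pow_le_pow_left₀ hr hrρ k) (by positivity) (by positivity)
              _ = ‖c (k, m)‖ * ρ ^ (k + m) := by rw [pow_add]; ring
    · -- vanishing
      intro z _
      have hps : Summable fun p : ℕ × ℕ => c p * z ^ p.1 * w ^ p.2 := hsummable z w
      have h1 : ∑' (k) (m), c (k, m) * z ^ k * w ^ m = 0 := by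
        rw [← Summable.tsum_prod hps]
        exact step3 z w
      rw [← h1]
      refine tsum_congr fun k => ?_
      rw [← tsum_mul_right]
      exact tsum_congr fun m => by ring
  intro p
  obtain ⟨n, m⟩ := p
  exact coeffZero1D m (fun m => c (n, m)) (hcSlice c hc n) (fun w _ => hinnerZero n w)

/-- If φ(ζ) = Σ a_{nm} ζⁿ ζ̄ᵐ (series absolutely summable everywhere) is holomorphic on
some nonempty open set U ⊆ ℂ, then φ is entire. -/
theorem entire_of_locally_holomorphic
    (a : ℕ × ℕ → ℂ)
    (hsum : ∀ z w : ℂ, Summable fun p : ℕ × ℕ => ‖a p * z ^ p.1 * w ^ p.2‖)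
    (φ : ℂ → ℂ)
    (hφ : φ = fun ζ => ∑' p : ℕ × ℕ, a p * ζ ^ p.1 * (starRingEnd ℂ ζ) ^ p.2)
    (U : Set ℂ) (hU : IsOpen U) (hne : U.Nonempty)
    (hdiff : DifferentiableOn ℂ φ U) :
    Differentiable ℂ φ := by
  have hc : ∀ r : ℝ, 0 ≤ r → Summable fun p : ℕ × ℕ => ‖a p‖ * r ^ (p.1 + p.2) := by
    intro r hr
    refine (hsum (r:ℂ) (r:ℂ)).congr fun p => ?_
    calc ‖a p * (r:ℂ) ^ p.1 * (r:ℂ) ^ p.2‖ = ‖a p‖ * |r| ^ p.1 * |r| ^ p.2 := by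
          simp [norm_mul, norm_pow]
      _ = ‖a p‖ * r ^ (p.1 + p.2) := by rw [_root_.abs_of_nonneg hr, pow_add]; ring
  -- Step 1: Cauchy–Riemann comparison on U
  have hvan : ∀ ζ₀ ∈ U,
      ∑' p : ℕ × ℕ, a p * (ζ₀ ^ p.1 * ((p.2 : ℂ) * (starRingEnd ℂ ζ₀) ^ (p.2 - 1))) = 0 := by
    intro ζ₀ hζ₀
    have hda : DifferentiableAt ℂ φ ζ₀ := hdiff.differentiableAt (hU.mem_nhds hζ₀)
    have hder : HasDerivAt φ (deriv φ ζ₀) ζ₀ := hda.hasDerivAt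
    set der := deriv φ ζ₀ with hderdef
    set β := (starRingEnd ℂ) ζ₀ with hβ
    -- direction 1
    have h1C := keyHasDerivAt a hc ζ₀ β 1 1 ((0:ℝ):ℂ)
    have h1R := h1C.comp_ofReal
    have he1 : (fun t : ℝ =>
        ∑' p : ℕ × ℕ, a p * (ζ₀ + 1 * (t:ℂ)) ^ p.1 * (β + 1 * (t:ℂ)) ^ p.2)
        = fun t : ℝ => φ (ζ₀ + (t:ℂ)) := by
      funext t
      rw [hφ]
      refine tsum_congr fun p => ?_
      have hcj : (starRingEnd ℂ) (ζ₀ + (t:ℂ)) = β + 1 * (t:ℂ) := by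
        simp [hβ, map_add, Complex.conj_ofReal]
      rw [hcj]
      ring_nf
    rw [he1] at h1R
    have hφ1 : HasDerivAt (fun t : ℝ => φ (ζ₀ + (t:ℂ))) der 0 := by
      have hin : HasDerivAt (fun z : ℂ => ζ₀ + z) 1 ((0:ℝ):ℂ) := by
        simpa using (hasDerivAt_id ((0:ℝ):ℂ)).const_add ζ₀
      have hout : HasDerivAt φ der (ζ₀ + ((0:ℝ):ℂ)) := by simpa using hder
      have := (hout.comp (((0:ℝ)):ℂ) hin).comp_ofReal
      simpa [Function.comp] using this
    have hD1 : der = ∑' p : ℕ × ℕ, a p *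
        (((p.1 : ℂ) * ζ₀ ^ (p.1 - 1) * 1) * β ^ p.2
          + ζ₀ ^ p.1 * ((p.2 : ℂ) * β ^ (p.2 - 1) * 1)) := by
      have := hφ1.unique h1R
      simpa using this
    -- direction I
    have h2C := keyHasDerivAt a hc ζ₀ β Complex.I (-Complex.I) ((0:ℝ):ℂ)
    have h2R := h2C.comp_ofReal
    have he2 : (fun t : ℝ =>
        ∑' p : ℕ × ℕ, a p * (ζ₀ + Complex.I * (t:ℂ)) ^ p.1
          * (β + (-Complex.I) * (t:ℂ)) ^ p.2)
        = fun t : ℝ => φ (ζ₀ + Complex.I * (t:ℂ)) := by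
      funext t
      rw [hφ]
      refine tsum_congr fun p => ?_
      have hcj : (starRingEnd ℂ) (ζ₀ + Complex.I * (t:ℂ)) = β + (-Complex.I) * (t:ℂ) := by
        simp [hβ, map_add, map_mul, Complex.conj_ofReal, Complex.conj_I]
      rw [hcj]
    rw [he2] at h2R
    have hφ2 : HasDerivAt (fun t : ℝ => φ (ζ₀ + Complex.I * (t:ℂ))) (der * Complex.I) 0 := by
      have hin : HasDerivAt (fun z : ℂ => ζ₀ + Complex.I * z) Complex.I ((0:ℝ):ℂ) := by
        simpa using ((hasDerivAt_id ((0:ℝ):ℂ)).const_mul Complex.I).const_add ζ₀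
      have hout : HasDerivAt φ der (ζ₀ + Complex.I * ((0:ℝ):ℂ)) := by simpa using hder
      have := (hout.comp (((0:ℝ)):ℂ) hin).comp_ofReal
      simpa [Function.comp] using this
    have hD2 : der * Complex.I = ∑' p : ℕ × ℕ, a p *
        (((p.1 : ℂ) * ζ₀ ^ (p.1 - 1) * Complex.I) * β ^ p.2
          + ζ₀ ^ p.1 * ((p.2 : ℂ) * β ^ (p.2 - 1) * (-Complex.I))) := by
      have := hφ2.unique h2R
      simpa using this
    -- combine
    have hS1 : Summable fun p : ℕ × ℕ => a p *
        (((p.1 : ℂ) * ζ₀ ^ (p.1 - 1) * 1) * β ^ p.2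
          + ζ₀ ^ p.1 * ((p.2 : ℂ) * β ^ (p.2 - 1) * 1)) := summableDerivAux a hc ζ₀ β 1 1
    have hS2 : Summable fun p : ℕ × ℕ => a p *
        (((p.1 : ℂ) * ζ₀ ^ (p.1 - 1) * Complex.I) * β ^ p.2
          + ζ₀ ^ p.1 * ((p.2 : ℂ) * β ^ (p.2 - 1) * (-Complex.I))) :=
      summableDerivAux a hc ζ₀ β Complex.I (-Complex.I)
    have hcomb : ∑' p : ℕ × ℕ, (a p *
        (((p.1 : ℂ) * ζ₀ ^ (p.1 - 1) * 1) * β ^ p.2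
          + ζ₀ ^ p.1 * ((p.2 : ℂ) * β ^ (p.2 - 1) * 1)) * Complex.I
        - a p * (((p.1 : ℂ) * ζ₀ ^ (p.1 - 1) * Complex.I) * β ^ p.2
          + ζ₀ ^ p.1 * ((p.2 : ℂ) * β ^ (p.2 - 1) * (-Complex.I)))) = 0 := by
      rw [Summable.tsum_sub (hS1.mul_right Complex.I) hS2, tsum_mul_right, ← hD1, ← hD2]
      ring
    have hre : ∑' p : ℕ × ℕ, (2 * Complex.I) *
        (a p * (ζ₀ ^ p.1 * ((p.2 : ℂ) * β ^ (p.2 - 1)))) = 0 := by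
      rw [← hcomb]
      exact tsum_congr fun p => by ring
    rw [tsum_mul_left] at hre
    have h2I : (2 * Complex.I) ≠ 0 := by simp [Complex.I_ne_zero]
    exact (mul_eq_zero.mp hre).resolve_left h2I
  -- Step 2: reindex and apply the identity theorem
  set b : ℕ × ℕ → ℂ := fun p => ((p.2 + 1 : ℕ) : ℂ) * a (p.1, p.2 + 1) with hbdef
  have hcb : ∀ r : ℝ, 0 ≤ r → Summable fun p : ℕ × ℕ => ‖b p‖ * r ^ (p.1 + p.2) := by
    intro r hr
    have hι : Function.Injective (fun p : ℕ × ℕ => (p.1, p.2 + 1)) := by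
      intro p q h
      simp only [Prod.mk.injEq] at h
      exact Prod.ext h.1 (by omega)
    have h1 : (1:ℝ) ≤ max r 1 := le_max_right r 1
    refine Summable.of_nonneg_of_le (fun p => by positivity) (fun p => ?_)
      ((hc (2 * max r 1) (by positivity)).comp_injective hι)
    simp only [Function.comp]
    have e1 : ‖b p‖ = ((p.2 + 1 : ℕ) : ℝ) * ‖a (p.1, p.2 + 1)‖ := by
      have hb : b p = ((p.2 + 1 : ℕ) : ℂ) * a (p.1, p.2 + 1) := rfl
      rw [hb, norm_mul, Complex.norm_natCast]
    rw [e1]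
    have hr1 : r ^ (p.1 + p.2) ≤ (max r 1) ^ (p.1 + p.2 + 1) :=
      le_trans (pow_le_pow_left₀ hr (le_max_left r 1) _)
        (pow_le_pow_right₀ h1 (by omega))
    have hn1 : ((p.2 + 1 : ℕ) : ℝ) ≤ 2 ^ (p.1 + p.2 + 1) := by
      have := Nat.lt_two_pow_self (n := p.2 + 1)
      have h2 : (2:ℕ) ^ (p.2 + 1) ≤ 2 ^ (p.1 + p.2 + 1) := Nat.pow_le_pow_right (by norm_num) (by omega)
      exact_mod_cast le_trans this.le h2
    calc ((p.2 + 1 : ℕ) : ℝ) * ‖a (p.1, p.2 + 1)‖ * r ^ (p.1 + p.2)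
        ≤ 2 ^ (p.1 + p.2 + 1) * ‖a (p.1, p.2 + 1)‖ * (max r 1) ^ (p.1 + p.2 + 1) := by
          refine mul_le_mul (mul_le_mul_of_nonneg_right hn1 (norm_nonneg _)) hr1
            (by positivity) (by positivity)
      _ = ‖a (p.1, p.2 + 1)‖ * (2 * max r 1) ^ (p.1 + (p.2 + 1)) := by
          rw [mul_pow]
          ring_nf
  have hvanb : ∀ ζ ∈ U, ∑' p : ℕ × ℕ, b p * ζ ^ p.1 * (starRingEnd ℂ ζ) ^ p.2 = 0 := by
    intro ζ hζ
    have hι : Function.Injective (fun p : ℕ × ℕ => (p.1, p.2 + 1)) := by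
      intro p q h
      simp only [Prod.mk.injEq] at h
      exact Prod.ext h.1 (by omega)
    have hsupp : Function.support
        (fun p : ℕ × ℕ => a p * (ζ ^ p.1 * ((p.2 : ℂ) * (starRingEnd ℂ ζ) ^ (p.2 - 1))))
        ⊆ Set.range (fun p : ℕ × ℕ => (p.1, p.2 + 1)) := by
      intro p hp
      rcases p with ⟨n, m⟩
      cases m with
      | zero => simp at hp
      | succ m => exact ⟨(n, m), rfl⟩
    have := hι.tsum_eq (f := fun p : ℕ × ℕ =>
      a p * (ζ ^ p.1 * ((p.2 : ℂ) * (starRingEnd ℂ ζ) ^ (p.2 - 1)))) hsupp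
    rw [hvan ζ hζ] at this
    rw [← this]
    refine tsum_congr fun p => ?_
    simp only [hbdef]
    push_cast
    ring_nf
  have hb0 := coeffZero2D b hcb U hU hne hvanb
  have ha' : ∀ n m : ℕ, a (n, m + 1) = 0 := by
    intro n m
    have := hb0 (n, m)
    simp only [hbdef] at this
    rcases mul_eq_zero.mp this with h | h
    · exact absurd h (by exact_mod_cast Nat.succ_ne_zero m)
    · exact h
  -- Step 3: φ is a power series in ζ alone
  have hφeq : φ = fun z => ∑' p : ℕ × ℕ, a p * ((0:ℂ) + 1 * z) ^ p.1 * ((1:ℂ) + 0 * z) ^ p.2 := by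
    rw [hφ]
    funext ζ
    refine tsum_congr fun p => ?_
    rcases p with ⟨n, m⟩
    cases m with
    | zero => simp
    | succ m => simp [ha' n m]
  rw [hφeq]
  exact fun z => (keyHasDerivAt a hc 0 1 1 0 z).differentiableAt
end
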